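/- ELPAω_lp proves the sequent ⊢ lp^⊥(x), lp^⊥(y), (∃^lp V¹ ∀u⁰ A_at(x, y, u, Vu))^⊥, ∃^lp z¹ (wit(x·y, z))^L, where A_at(x,y,u,v) is the quantifier-free formula expressing that x(⟨u⟩ * ȳv) ≠₀ 0 and x(⟨u⟩ * ȳw) =₀ 0 for all w < v. -/

import Mathlib

namespace WR

/-- Finite types of `EPAω`: `o` is the type of natural numbers, `arr σ τ` is `σ → τ`. -/
inductive Ty : Type
  | o : Ty
  | arr : Ty → Ty → Ty
  deriving DecidableEq

notation "𝕆" => Ty.o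
infixr:60 " ⤳ " => Ty.arr

/-- The type `1` of number sequences. -/
abbrev Ty1 : Ty := 𝕆 ⤳ 𝕆
/-- The type of binary number functions. -/
abbrev Ty2 : Ty := 𝕆 ⤳ 𝕆 ⤳ 𝕆

/-- Hereditarily computable types: `comp 0 = 1`, `comp (ρ ⤳ τ) = comp ρ ⤳ comp τ`. -/
def Ty.comp : Ty → Ty
  | .o => Ty1
  | .arr ρ τ => .arr ρ.comp τ.comp

/-- Terms of `EPAω`: typed variables, zero, successor, projectors (K), combinators (S),
recursors (R), λ-abstraction and application. -/
inductive Tm : Ty → Type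
  | var (n : ℕ) (τ : Ty) : Tm τ
  | zero : Tm 𝕆
  | succ : Tm (𝕆 ⤳ 𝕆)
  | K (σ τ : Ty) : Tm (σ ⤳ τ ⤳ σ)
  | S (δ ρ τ : Ty) : Tm ((δ ⤳ ρ ⤳ τ) ⤳ (δ ⤳ ρ) ⤳ δ ⤳ τ)
  | R (τ : Ty) : Tm (τ ⤳ (𝕆 ⤳ τ ⤳ τ) ⤳ 𝕆 ⤳ τ)
  | lam {τ : Ty} (n : ℕ) (σ : Ty) : Tm τ → Tm (σ ⤳ τ)
  | app {σ τ : Ty} : Tm (σ ⤳ τ) → Tm σ → Tm τ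

/-- Free variables of a term (as (index, type) pairs). -/
def Tm.fvars : {τ : Ty} → Tm τ → Set (ℕ × Ty)
  | _, .var m ρ => {(m, ρ)}
  | _, .zero => ∅
  | _, .succ => ∅
  | _, .K _ _ => ∅
  | _, .S _ _ _ => ∅
  | _, .R _ => ∅
  | _, .lam m ρ t => Tm.fvars t \ {(m, ρ)}
  | _, .app f a => Tm.fvars f ∪ Tm.fvars a

/-- A term is closed if it has no free variables. -/
def Tm.Closed {τ : Ty} (t : Tm τ) : Prop := t.fvars = ∅

/-- A strict upper bound for all (free or bound) variable indices occurring in a term. -/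
def Tm.maxVar : {τ : Ty} → Tm τ → ℕ
  | _, .var m _ => m + 1
  | _, .zero => 0
  | _, .succ => 0
  | _, .K _ _ => 0
  | _, .S _ _ _ => 0
  | _, .R _ => 0
  | _, .lam m _ t => max (m + 1) (Tm.maxVar t)
  | _, .app f a => max (Tm.maxVar f) (Tm.maxVar a)

/-- Substitution of the term `s` for the variable `(n, σ)` in a term (naive). -/
def Tm.subst : {τ : Ty} → Tm τ → ℕ → {σ : Ty} → Tm σ → Tm τ
  | _, .var m ρ, n, σ, s =>
      if h : m = n ∧ ρ = σ then (by rw [h.2]; exact s) else .var m ρ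
  | _, .zero, _, _, _ => .zero
  | _, .succ, _, _, _ => .succ
  | _, .K σ' τ', _, _, _ => .K σ' τ'
  | _, .S δ ρ τ', _, _, _ => .S δ ρ τ'
  | _, .R τ', _, _, _ => .R τ'
  | _, .lam m ρ t, n, σ, s =>
      if m = n ∧ ρ = σ then .lam m ρ t else .lam m ρ (Tm.subst t n s)
  | _, .app f a, n, _, s => .app (Tm.subst f n s) (Tm.subst a n s)

/-- `s` is free for the variable `(n, σ)` in the term `t`:
no free occurrence of the variable lies in the scope of a binder capturing a
free variable of `s`. -/
def Tm.FreeForIn {σ : Ty} (s : Tm σ) (n : ℕ) : {τ : Ty} → Tm τ → Prop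
  | _, .lam m ρ t =>
      ((n, σ) ∉ Tm.fvars t) ∨ (m = n ∧ ρ = σ) ∨
        (((m, ρ) ∉ s.fvars) ∧ Tm.FreeForIn s n t)
  | _, .app f a => Tm.FreeForIn s n f ∧ Tm.FreeForIn s n a
  | _, _ => True

/-- Variable of type `0`. -/
abbrev v0 (n : ℕ) : Tm 𝕆 := .var n 𝕆
/-- The numeral `1`. -/
def tm1 : Tm 𝕆 := Tm.app Tm.succ Tm.zero

/-- Recursion at type `0`. -/
def recO (y : Tm 𝕆) (z : Tm (𝕆 ⤳ 𝕆 ⤳ 𝕆)) (n : Tm 𝕆) : Tm 𝕆 :=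
  (((Tm.R 𝕆).app y).app z).app n

/-- Addition: `addT a b = a + b`. -/
def addT : Tm Ty2 :=
  .lam 0 𝕆 (.lam 1 𝕆 (recO (v0 0) (.lam 2 𝕆 (.lam 3 𝕆 (Tm.succ.app (v0 3)))) (v0 1)))

/-- Predecessor (with `pred 0 = 0`). -/
def predT : Tm Ty1 :=
  .lam 0 𝕆 (recO .zero (.lam 1 𝕆 (.lam 2 𝕆 (v0 1))) (v0 0))

/-- `condT c a b` equals `a` if `c = 0` and `b` otherwise. -/
def condT : Tm (𝕆 ⤳ 𝕆 ⤳ 𝕆 ⤳ 𝕆) :=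
  .lam 0 𝕆 (.lam 1 𝕆 (.lam 2 𝕆 (recO (v0 1) (.lam 3 𝕆 (.lam 4 𝕆 (v0 2))) (v0 0))))

/-- Cut-off subtraction `a ∸ b`. -/
def monusT : Tm Ty2 :=
  .lam 0 𝕆 (.lam 1 𝕆 (recO (v0 0) (.lam 2 𝕆 (.lam 3 𝕆 (predT.app (v0 3)))) (v0 1)))

/-- Triangular numbers `tri n = 0 + 1 + ⋯ + n`. -/
def triT : Tm Ty1 :=
  .lam 0 𝕆 (recO .zero
    (.lam 1 𝕆 (.lam 2 𝕆 ((addT.app (v0 2)).app (Tm.succ.app (v0 1))))) (v0 0))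

/-- Cantor pairing `j x y = tri (x + y) + y` (injective). -/
def pairT : Tm Ty2 :=
  .lam 0 𝕆 (.lam 1 𝕆
    ((addT.app (triT.app ((addT.app (v0 0)).app (v0 1)))).app (v0 1)))

/-- Signum: `sg 0 = 0`, `sg (n+1) = 1`. -/
def sgT : Tm Ty1 :=
  .lam 0 𝕆 (recO .zero (.lam 1 𝕆 (.lam 2 𝕆 tm1)) (v0 0))

/-- Pointwise pairing of two sequences: `pwPairT u y = λk. j (u k) (y k)`. -/
def pwPairT : Tm (Ty1 ⤳ Ty1 ⤳ Ty1) :=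
  .lam 0 Ty1 (.lam 1 Ty1 (.lam 2 𝕆
    ((pairT.app ((Tm.var 0 Ty1).app (v0 2))).app ((Tm.var 1 Ty1).app (v0 2)))))

/-- `seqCodeT z u v` is the code of the finite sequence `⟨u⟩ * z̄v = (u, z 0, …, z (v-1))`
(coded by iterated injective pairing). -/
def seqCodeT : Tm (Ty1 ⤳ 𝕆 ⤳ 𝕆 ⤳ 𝕆) :=
  .lam 0 Ty1 (.lam 1 𝕆 (.lam 2 𝕆
    (recO (Tm.succ.app ((pairT.app (v0 1)).app .zero))
      (.lam 3 𝕆 (.lam 4 𝕆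
        (Tm.succ.app ((pairT.app ((Tm.var 0 Ty1).app (v0 3))).app (v0 4)))))
      (v0 2))))

/-- `initCodeT z v` is the code of the finite sequence `z̄v = (z 0, …, z (v-1))`. -/
def initCodeT : Tm (Ty1 ⤳ 𝕆 ⤳ 𝕆) :=
  .lam 0 Ty1 (.lam 1 𝕆
    (recO .zero
      (.lam 2 𝕆 (.lam 3 𝕆
        (Tm.succ.app ((pairT.app ((Tm.var 0 Ty1).app (v0 2))).app (v0 3)))))
      (v0 1)))

/-- Formulas of (classical) `EPAω`. The only atomic predicate is equality at type `0`.-/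
inductive CForm : Type
  | eq : Tm 𝕆 → Tm 𝕆 → CForm
  | not : CForm → CForm
  | and : CForm → CForm → CForm
  | or : CForm → CForm → CForm
  | imp : CForm → CForm → CForm
  | all : ℕ → Ty → CForm → CForm
  | ex : ℕ → Ty → CForm → CForm

/-- Free variables of a classical formula. -/
def CForm.fvars : CForm → Set (ℕ × Ty)
  | .eq s t => s.fvars ∪ t.fvars
  | .not A => A.fvars
  | .and A B => A.fvars ∪ B.fvars
  | .or A B => A.fvars ∪ B.fvars
  | .imp A B => A.fvars ∪ B.fvars
  | .all n τ A => A.fvars \ {(n, τ)}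
  | .ex n τ A => A.fvars \ {(n, τ)}

/-- Substitution of a term for a variable in a classical formula (naive). -/
def CForm.substTm (A : CForm) (n : ℕ) {σ : Ty} (s : Tm σ) : CForm :=
  match A with
  | .eq a b => .eq (a.subst n s) (b.subst n s)
  | .not A => .not (A.substTm n s)
  | .and A B => .and (A.substTm n s) (B.substTm n s)
  | .or A B => .or (A.substTm n s) (B.substTm n s)
  | .imp A B => .imp (A.substTm n s) (B.substTm n s)
  | .all m τ A => if m = n ∧ τ = σ then .all m τ A else .all m τ (A.substTm n s)
  | .ex m τ A => if m = n ∧ τ = σ then .ex m τ A else .ex m τ (A.substTm n s)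

/-- `s` is free for the variable `(n, σ)` in the classical formula `A`. -/
def CForm.FreeFor {σ : Ty} (s : Tm σ) (n : ℕ) : CForm → Prop
  | .eq _ _ => True
  | .not A => CForm.FreeFor s n A
  | .and A B => CForm.FreeFor s n A ∧ CForm.FreeFor s n B
  | .or A B => CForm.FreeFor s n A ∧ CForm.FreeFor s n B
  | .imp A B => CForm.FreeFor s n A ∧ CForm.FreeFor s n B
  | .all m τ A =>
      ((n, σ) ∉ (A.fvars \ {(m, τ)})) ∨ (((m, τ) ∉ s.fvars) ∧ CForm.FreeFor s n A)
  | .ex m τ A =>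
      ((n, σ) ∉ (A.fvars \ {(m, τ)})) ∨ (((m, τ) ∉ s.fvars) ∧ CForm.FreeFor s n A)

/-- Quantifier-free classical formulas. -/
def CForm.qf : CForm → Prop
  | .eq _ _ => True
  | .not A => A.qf
  | .and A B => A.qf ∧ B.qf
  | .or A B => A.qf ∧ B.qf
  | .imp A B => A.qf ∧ B.qf
  | .all _ _ _ => False
  | .ex _ _ _ => False

/-- Higher-type equality as an abbreviation: `s =_{ρ ⤳ τ} t :≡ ∀x (s x =_τ t x)`. -/
def eqAt : (τ : Ty) → Tm τ → Tm τ → CForm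
  | 𝕆, s, t => .eq s t
  | .arr σ τ, s, t =>
      let n := max s.maxVar t.maxVar
      .all n σ (eqAt τ (s.app (.var n σ)) (t.app (.var n σ)))

/-- `s ≠₀ t`. -/
def neqF (s t : Tm 𝕆) : CForm := .not (.eq s t)
/-- Classical bi-implication. -/
def iffC (A B : CForm) : CForm := (A.imp B).and (B.imp A)

/-- `s <₀ t` expressed as `∃k (s + (k+1) = t)`. -/
def ltF (s t : Tm 𝕆) : CForm :=
  let k := max s.maxVar t.maxVar
  .ex k 𝕆 (.eq ((addT.app s).app (Tm.app Tm.succ (v0 k))) t)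

/-- `s ≤₀ t` expressed as `∃k (s + k = t)`. -/
def leF (s t : Tm 𝕆) : CForm :=
  let k := max s.maxVar t.maxVar
  .ex k 𝕆 (.eq ((addT.app s).app (v0 k)) t)

/-- The axioms of `EPAω`: equality axioms, successor axioms, defining equations for the
projectors, combinators, recursors and λ-abstraction, extensionality and full induction. -/
inductive EPAAx : CForm → Prop
  | eqRefl (n : ℕ) : EPAAx (.eq (v0 n) (v0 n))
  | eqSym (n m : ℕ) :
      EPAAx ((CForm.eq (v0 n) (v0 m)).imp (.eq (v0 m) (v0 n)))
  | eqTrans (n m k : ℕ) :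
      EPAAx (((CForm.eq (v0 n) (v0 m)).and (.eq (v0 m) (v0 k))).imp (.eq (v0 n) (v0 k)))
  | eqSub (A : CForm) (z x y : ℕ)
      (hx : CForm.FreeFor (v0 x) z A) (hy : CForm.FreeFor (v0 y) z A) :
      EPAAx ((CForm.eq (v0 x) (v0 y)).imp
        ((A.substTm z (v0 x)).imp (A.substTm z (v0 y))))
  | succInj (n m : ℕ) :
      EPAAx ((CForm.eq (Tm.app Tm.succ (v0 n)) (Tm.app Tm.succ (v0 m))).imp
        (.eq (v0 n) (v0 m)))
  | succNeZero (n : ℕ) : EPAAx (.not (.eq (Tm.app Tm.succ (v0 n)) .zero))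
  | axK {σ τ : Ty} (a : Tm σ) (b : Tm τ) :
      EPAAx (eqAt σ (((Tm.K σ τ).app a).app b) a)
  | axS {δ ρ τ : Ty} (x : Tm (δ ⤳ ρ ⤳ τ)) (y : Tm (δ ⤳ ρ)) (z : Tm δ) :
      EPAAx (eqAt τ ((((Tm.S δ ρ τ).app x).app y).app z) ((x.app z).app (y.app z)))
  | axR0 {τ : Ty} (y : Tm τ) (z : Tm (𝕆 ⤳ τ ⤳ τ)) :
      EPAAx (eqAt τ ((((Tm.R τ).app y).app z).app .zero) y)
  | axRS {τ : Ty} (y : Tm τ) (z : Tm (𝕆 ⤳ τ ⤳ τ)) (n : Tm 𝕆) :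
      EPAAx (eqAt τ ((((Tm.R τ).app y).app z).app (Tm.app Tm.succ n))
        ((z.app n).app ((((Tm.R τ).app y).app z).app n)))
  | axBeta {σ τ : Ty} (n : ℕ) (t : Tm τ) (s : Tm σ) (h : s.FreeForIn n t) :
      EPAAx (eqAt τ ((Tm.lam n σ t).app s) (t.subst n s))
  | axExt {ρ τ : Ty} (nz nx ny : ℕ) :
      EPAAx ((eqAt ρ (.var nx ρ) (.var ny ρ)).imp
        (eqAt τ ((Tm.var nz (ρ ⤳ τ)).app (.var nx ρ)) ((Tm.var nz (ρ ⤳ τ)).app (.var ny ρ))))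
  | axInd (A : CForm) (n : ℕ)
      (h : CForm.FreeFor (Tm.app Tm.succ (v0 n)) n A) :
      EPAAx (((A.substTm n (Tm.zero)).and
        (.all n 𝕆 (A.imp (A.substTm n (Tm.app Tm.succ (v0 n)))))).imp (.all n 𝕆 A))

/-- `EPAω`'s axioms as a set of formulas. -/
def EPA : Set CForm := fun A => EPAAx A

/-- The quantifier-free axiom of choice `QF-AC⁰⁰`. -/
inductive QFAC : CForm → Prop
  | mk (A : CForm) (x y Y : ℕ) (hqf : A.qf) (hxy : x ≠ y)
      (hY : (Y, Ty1) ∉ A.fvars)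
      (hff : CForm.FreeFor ((Tm.var Y Ty1).app (v0 x)) y A) :
      QFAC ((CForm.all x 𝕆 (.ex y 𝕆 A)).imp
        (.ex Y Ty1 (.all x 𝕆 (A.substTm y ((Tm.var Y Ty1).app (v0 x))))))

/-- `QF-AC⁰⁰` as a set of formulas. -/
def QFA : Set CForm := fun A => QFAC A

/-- Gentzen-style two-sided sequent calculus for classical logic over `Tm`,
with axioms from the set `Ax`. `CProof Ax Γ Δ` means `Γ ⊢ Δ` is derivable. -/
inductive CProof (Ax : Set CForm) : List CForm → List CForm → Prop
  | ax {A} (h : A ∈ Ax) : CProof Ax [] [A]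
  | id (A) : CProof Ax [A] [A]
  | cut {Γ Δ Γ' Δ' A} :
      CProof Ax Γ (A :: Δ) → CProof Ax (A :: Γ') Δ' → CProof Ax (Γ ++ Γ') (Δ ++ Δ')
  | permL {Γ Γ' Δ} : CProof Ax Γ Δ → Γ.Perm Γ' → CProof Ax Γ' Δ
  | permR {Γ Δ Δ'} : CProof Ax Γ Δ → Δ.Perm Δ' → CProof Ax Γ Δ'
  | wkL {Γ Δ} (A) : CProof Ax Γ Δ → CProof Ax (A :: Γ) Δ
  | wkR {Γ Δ} (A) : CProof Ax Γ Δ → CProof Ax Γ (A :: Δ)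
  | conL {Γ Δ A} : CProof Ax (A :: A :: Γ) Δ → CProof Ax (A :: Γ) Δ
  | conR {Γ Δ A} : CProof Ax Γ (A :: A :: Δ) → CProof Ax Γ (A :: Δ)
  | notL {Γ Δ A} : CProof Ax Γ (A :: Δ) → CProof Ax (CForm.not A :: Γ) Δ
  | notR {Γ Δ A} : CProof Ax (A :: Γ) Δ → CProof Ax Γ (CForm.not A :: Δ)
  | andL {Γ Δ A B} : CProof Ax (A :: B :: Γ) Δ → CProof Ax ((CForm.and A B) :: Γ) Δ
  | andR {Γ Δ A B} :
      CProof Ax Γ (A :: Δ) → CProof Ax Γ (B :: Δ) → CProof Ax Γ ((CForm.and A B) :: Δ)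
  | orL {Γ Δ A B} :
      CProof Ax (A :: Γ) Δ → CProof Ax (B :: Γ) Δ → CProof Ax ((CForm.or A B) :: Γ) Δ
  | orR {Γ Δ A B} : CProof Ax Γ (A :: B :: Δ) → CProof Ax Γ ((CForm.or A B) :: Δ)
  | impL {Γ Δ A B} :
      CProof Ax Γ (A :: Δ) → CProof Ax (B :: Γ) Δ → CProof Ax ((CForm.imp A B) :: Γ) Δ
  | impR {Γ Δ A B} : CProof Ax (A :: Γ) (B :: Δ) → CProof Ax Γ ((CForm.imp A B) :: Δ)
  | allL {Γ Δ A n σ} (t : Tm σ) (hff : CForm.FreeFor t n A) :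
      CProof Ax ((A.substTm n t) :: Γ) Δ → CProof Ax ((CForm.all n σ A) :: Γ) Δ
  | allR {Γ Δ A n σ}
      (hfr : ∀ B ∈ Γ, (n, σ) ∉ CForm.fvars B) (hfr' : ∀ B ∈ Δ, (n, σ) ∉ CForm.fvars B) :
      CProof Ax Γ (A :: Δ) → CProof Ax Γ ((CForm.all n σ A) :: Δ)
  | exL {Γ Δ A n σ}
      (hfr : ∀ B ∈ Γ, (n, σ) ∉ CForm.fvars B) (hfr' : ∀ B ∈ Δ, (n, σ) ∉ CForm.fvars B) :
      CProof Ax (A :: Γ) Δ → CProof Ax ((CForm.ex n σ A) :: Γ) Δ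
  | exR {Γ Δ A n σ} (t : Tm σ) (hff : CForm.FreeFor t n A) :
      CProof Ax Γ ((A.substTm n t) :: Δ) → CProof Ax Γ ((CForm.ex n σ A) :: Δ)

/-- Formulas of the linear calculi `ELPAω_lp` / `ELPAω_eq` (in negation normal form,
with dual pairs of atoms). `ph`/`nph` is a placeholder (and its dual). -/
inductive LForm : Type
  | one : LForm
  | zer : LForm
  | top : LForm
  | bot : LForm
  | eq : Tm 𝕆 → Tm 𝕆 → LForm
  | neq : Tm 𝕆 → Tm 𝕆 → LForm
  | lp : (τ : Ty) → Tm τ → LForm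
  | nlp : (τ : Ty) → Tm τ → LForm
  | deq : Tm 𝕆 → Tm 𝕆 → LForm
  | ndeq : Tm 𝕆 → Tm 𝕆 → LForm
  | tag : Tm 𝕆 → LForm
  | ntag : Tm 𝕆 → LForm
  | ph : LForm
  | nph : LForm
  | tensor : LForm → LForm → LForm
  | par : LForm → LForm → LForm
  | oplus : LForm → LForm → LForm
  | withC : LForm → LForm → LForm
  | bang : LForm → LForm
  | quest : LForm → LForm
  | all : ℕ → Ty → LForm → LForm
  | ex : ℕ → Ty → LForm → LForm

/-- Linear negation `A^⊥` (an involution, by De Morgan duality). -/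
def LForm.neg : LForm → LForm
  | .one => .bot
  | .bot => .one
  | .zer => .top
  | .top => .zer
  | .eq s t => .neq s t
  | .neq s t => .eq s t
  | .lp τ t => .nlp τ t
  | .nlp τ t => .lp τ t
  | .deq s t => .ndeq s t
  | .ndeq s t => .deq s t
  | .tag t => .ntag t
  | .ntag t => .tag t
  | .ph => .nph
  | .nph => .ph
  | .tensor A B => .par A.neg B.neg
  | .par A B => .tensor A.neg B.neg
  | .oplus A B => .withC A.neg B.neg
  | .withC A B => .oplus A.neg B.neg
  | .bang A => .quest A.neg
  | .quest A => .bang A.neg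
  | .all n τ A => .ex n τ A.neg
  | .ex n τ A => .all n τ A.neg

/-- Linear implication `A ⊸ B :≡ A^⊥ ⅋ B`. -/
def LForm.limp (A B : LForm) : LForm := .par A.neg B

/-- Free variables of a linear formula. -/
def LForm.fvars : LForm → Set (ℕ × Ty)
  | .eq s t => s.fvars ∪ t.fvars
  | .neq s t => s.fvars ∪ t.fvars
  | .deq s t => s.fvars ∪ t.fvars
  | .ndeq s t => s.fvars ∪ t.fvars
  | .lp _ t => t.fvars
  | .nlp _ t => t.fvars
  | .tag t => t.fvars
  | .ntag t => t.fvars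
  | .tensor A B => A.fvars ∪ B.fvars
  | .par A B => A.fvars ∪ B.fvars
  | .oplus A B => A.fvars ∪ B.fvars
  | .withC A B => A.fvars ∪ B.fvars
  | .bang A => A.fvars
  | .quest A => A.fvars
  | .all n τ A => A.fvars \ {(n, τ)}
  | .ex n τ A => A.fvars \ {(n, τ)}
  | _ => ∅

/-- A strict upper bound for all variable indices occurring in a linear formula. -/
def LForm.maxVar : LForm → ℕ
  | .eq s t => max s.maxVar t.maxVar
  | .neq s t => max s.maxVar t.maxVar
  | .deq s t => max s.maxVar t.maxVar
  | .ndeq s t => max s.maxVar t.maxVar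
  | .lp _ t => t.maxVar
  | .nlp _ t => t.maxVar
  | .tag t => t.maxVar
  | .ntag t => t.maxVar
  | .tensor A B => max A.maxVar B.maxVar
  | .par A B => max A.maxVar B.maxVar
  | .oplus A B => max A.maxVar B.maxVar
  | .withC A B => max A.maxVar B.maxVar
  | .bang A => A.maxVar
  | .quest A => A.maxVar
  | .all n _ A => max (n + 1) A.maxVar
  | .ex n _ A => max (n + 1) A.maxVar
  | _ => 0

/-- Substitution of a term for a variable in a linear formula (naive). -/
def LForm.substTm (A : LForm) (n : ℕ) {σ : Ty} (s : Tm σ) : LForm :=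
  match A with
  | .eq a b => .eq (a.subst n s) (b.subst n s)
  | .neq a b => .neq (a.subst n s) (b.subst n s)
  | .deq a b => .deq (a.subst n s) (b.subst n s)
  | .ndeq a b => .ndeq (a.subst n s) (b.subst n s)
  | .lp τ t => .lp τ (t.subst n s)
  | .nlp τ t => .nlp τ (t.subst n s)
  | .tag t => .tag (t.subst n s)
  | .ntag t => .ntag (t.subst n s)
  | .tensor A B => .tensor (A.substTm n s) (B.substTm n s)
  | .par A B => .par (A.substTm n s) (B.substTm n s)
  | .oplus A B => .oplus (A.substTm n s) (B.substTm n s)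
  | .withC A B => .withC (A.substTm n s) (B.substTm n s)
  | .bang A => .bang (A.substTm n s)
  | .quest A => .quest (A.substTm n s)
  | .all m τ A => if m = n ∧ τ = σ then .all m τ A else .all m τ (A.substTm n s)
  | .ex m τ A => if m = n ∧ τ = σ then .ex m τ A else .ex m τ (A.substTm n s)
  | B => B

/-- `s` is free for the variable `(n, σ)` in the linear formula `A`. -/
def LForm.FreeFor {σ : Ty} (s : Tm σ) (n : ℕ) : LForm → Prop
  | .tensor A B => LForm.FreeFor s n A ∧ LForm.FreeFor s n B
  | .par A B => LForm.FreeFor s n A ∧ LForm.FreeFor s n B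
  | .oplus A B => LForm.FreeFor s n A ∧ LForm.FreeFor s n B
  | .withC A B => LForm.FreeFor s n A ∧ LForm.FreeFor s n B
  | .bang A => LForm.FreeFor s n A
  | .quest A => LForm.FreeFor s n A
  | .all m τ A =>
      ((n, σ) ∉ (A.fvars \ {(m, τ)})) ∨ (((m, τ) ∉ s.fvars) ∧ LForm.FreeFor s n A)
  | .ex m τ A =>
      ((n, σ) ∉ (A.fvars \ {(m, τ)})) ∨ (((m, τ) ∉ s.fvars) ∧ LForm.FreeFor s n A)
  | _ => True

/-- Nonlinear formulas: those containing no `⊕`, `&` and no linear predicate. -/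
def LForm.Nonlinear : LForm → Prop
  | .oplus _ _ => False
  | .withC _ _ => False
  | .lp _ _ => False
  | .nlp _ _ => False
  | .tensor A B => A.Nonlinear ∧ B.Nonlinear
  | .par A B => A.Nonlinear ∧ B.Nonlinear
  | .bang A => A.Nonlinear
  | .quest A => A.Nonlinear
  | .all _ _ A => A.Nonlinear
  | .ex _ _ A => A.Nonlinear
  | _ => True

/-- Formulas containing neither dot-equality nor the tagging predicate. -/
def LForm.NoDotTag : LForm → Prop
  | .deq _ _ => False
  | .ndeq _ _ => False
  | .tag _ => False
  | .ntag _ => False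
  | .tensor A B => A.NoDotTag ∧ B.NoDotTag
  | .par A B => A.NoDotTag ∧ B.NoDotTag
  | .oplus A B => A.NoDotTag ∧ B.NoDotTag
  | .withC A B => A.NoDotTag ∧ B.NoDotTag
  | .bang A => A.NoDotTag
  | .quest A => A.NoDotTag
  | .all _ _ A => A.NoDotTag
  | .ex _ _ A => A.NoDotTag
  | _ => True

/-- The Girard embedding `A ↦ A^L` of classical formulas into linear logic:
`∧ ↦ ⊗`, `∨ ↦ ⅋`, `¬ ↦ (·)^⊥`, `→ ↦ ⊸`. -/
def CForm.emb : CForm → LForm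
  | .eq s t => .eq s t
  | .not A => A.emb.neg
  | .and A B => .tensor A.emb B.emb
  | .or A B => .par A.emb B.emb
  | .imp A B => .par A.emb.neg B.emb
  | .all n τ A => .all n τ A.emb
  | .ex n τ A => .ex n τ A.emb

/-- Higher-type linear equality: `s =_{ρ ⤳ τ} t :≡ ∀x (s x =_τ t x)`. -/
def leqAt : (τ : Ty) → Tm τ → Tm τ → LForm
  | 𝕆, s, t => .eq s t
  | .arr σ τ, s, t =>
      let n := max s.maxVar t.maxVar
      .all n σ (leqAt τ (s.app (.var n σ)) (t.app (.var n σ)))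

/-- Higher-type dot-equality: `s ≐_{ρ ⤳ τ} t :≡ ∀x (s x ≐_τ t x)`. -/
def deqAt : (τ : Ty) → Tm τ → Tm τ → LForm
  | 𝕆, s, t => .deq s t
  | .arr σ τ, s, t =>
      let n := max s.maxVar t.maxVar
      .all n σ (deqAt τ (s.app (.var n σ)) (t.app (.var n σ)))

/-- Left part of the linear axiom of choice `(lAC)`:
`(∀x⁰ ∃y⁰ α x y =₀ 0)^⊥`. -/
def lACleft (a x y : ℕ) : LForm :=
  (LForm.all x 𝕆 (.ex y 𝕆
    (.eq (((Tm.var a Ty2).app (v0 x)).app (v0 y)) .zero))).neg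

/-- Right part of the linear axiom of choice `(lAC)`:
`∃Y¹ (∀x⁰ (α x (Y x) =₀ 0) ⊗ !(lp(α) ⊸ lp(Y)))`. -/
def lACright (a Y x : ℕ) : LForm :=
  .ex Y Ty1 ((LForm.all x 𝕆
      (.eq (((Tm.var a Ty2).app (v0 x)).app ((Tm.var Y Ty1).app (v0 x))) .zero)).tensor
    (.bang ((LForm.lp Ty2 (.var a Ty2)).limp (.lp Ty1 (.var Y Ty1)))))

/-- One-sided sequent calculus for the linear systems. `LProof affine eqc Ax Γ` means
that the sequent `⊢ Γ` is derivable, where: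
* `affine = true` adds unrestricted weakening `(w)` (the affine calculi `EAPAω`),
* `eqc = true` adds the dot-equality/tagging rules of the `_eq` calculi and restricts
  `(!₂)` to nonlinear formulas without `≐`/`□`,
* `Ax` is a set of classical formulas whose Girard embeddings are available as axioms
  (the embedded `EPAω` axioms plus possibly further formulas `Γ^L`). -/
inductive LProof (affine eqc : Bool) (Ax : Set CForm) : List LForm → Prop
  | fromAx {A} (h : A ∈ Ax) : LProof affine eqc Ax [A.emb]
  | id (A : LForm) : LProof affine eqc Ax [A, A.neg]
  | cut {Γ Δ A} :
      LProof affine eqc Ax (A :: Γ) → LProof affine eqc Ax (A.neg :: Δ) →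
      LProof affine eqc Ax (Γ ++ Δ)
  | perm {Γ Γ'} : LProof affine eqc Ax Γ → Γ.Perm Γ' → LProof affine eqc Ax Γ'
  | tensor {Γ Δ A B} :
      LProof affine eqc Ax (A :: Γ) → LProof affine eqc Ax (B :: Δ) →
      LProof affine eqc Ax ((LForm.tensor A B) :: Γ ++ Δ)
  | par {Γ A B} :
      LProof affine eqc Ax (A :: B :: Γ) → LProof affine eqc Ax ((LForm.par A B) :: Γ)
  | one : LProof affine eqc Ax [.one]
  | botR {Γ} : LProof affine eqc Ax Γ → LProof affine eqc Ax (.bot :: Γ)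
  | withR {Γ A B} :
      LProof affine eqc Ax (A :: Γ) → LProof affine eqc Ax (B :: Γ) →
      LProof affine eqc Ax ((LForm.withC A B) :: Γ)
  | top {Γ} : LProof affine eqc Ax (.top :: Γ)
  | oplus1 {Γ A B} : LProof affine eqc Ax (A :: Γ) →
      LProof affine eqc Ax ((LForm.oplus A B) :: Γ)
  | oplus2 {Γ A B} : LProof affine eqc Ax (B :: Γ) →
      LProof affine eqc Ax ((LForm.oplus A B) :: Γ)
  | bangR {Γ A} (h : ∀ B ∈ Γ, ∃ C, B = LForm.quest C) :
      LProof affine eqc Ax (A :: Γ) → LProof affine eqc Ax ((LForm.bang A) :: Γ)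
  | der {Γ A} : LProof affine eqc Ax (A :: Γ) →
      LProof affine eqc Ax ((LForm.quest A) :: Γ)
  | wkq {Γ} (A) : LProof affine eqc Ax Γ → LProof affine eqc Ax ((LForm.quest A) :: Γ)
  | conq {Γ A} :
      LProof affine eqc Ax (LForm.quest A :: LForm.quest A :: Γ) →
      LProof affine eqc Ax (LForm.quest A :: Γ)
  | allR {Γ A n σ} (h : ∀ B ∈ Γ, (n, σ) ∉ LForm.fvars B) :
      LProof affine eqc Ax (A :: Γ) → LProof affine eqc Ax ((LForm.all n σ A) :: Γ)
  | exR {Γ A n σ} (t : Tm σ) (hff : LForm.FreeFor t n A) :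
      LProof affine eqc Ax ((A.substTm n t) :: Γ) →
      LProof affine eqc Ax ((LForm.ex n σ A) :: Γ)
  -- axioms and rules for the linear predicate
  | lpAx {τ} (t : Tm τ) (h : t.Closed) : LProof affine eqc Ax [.lp τ t]
  | bang2 {A} (h : A.Nonlinear) (h2 : eqc = true → A.NoDotTag) :
      LProof affine eqc Ax [A.neg, .bang A]
  | lpCon {Γ τ t} :
      LProof affine eqc Ax (LForm.nlp τ t :: LForm.nlp τ t :: Γ) →
      LProof affine eqc Ax (LForm.nlp τ t :: Γ)
  | lpApp {ρ τ} (t : Tm (ρ ⤳ τ)) (r : Tm ρ) :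
      LProof affine eqc Ax [.nlp (ρ ⤳ τ) t, .nlp ρ r, .lp τ (t.app r)]
  | lAC (a Y x y : ℕ) (hxy : x ≠ y) :
      LProof affine eqc Ax [lACleft a x y, lACright a Y x]
  -- unrestricted weakening for the affine calculi
  | wk {Γ} (A) (h : affine = true) : LProof affine eqc Ax Γ →
      LProof affine eqc Ax (A :: Γ)
  -- rules of the `_eq` calculi
  | dotSucc (n : ℕ) (h : eqc = true) :
      LProof affine eqc Ax [.bang (.ndeq (Tm.app Tm.succ (v0 n)) .zero)]
  | dotEq1 {τ} {s t : Tm τ} (h : eqc = true) :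
      LProof affine eqc Ax [leqAt τ s t] → LProof affine eqc Ax [.bang (deqAt τ s t)]
  | dotEq2 (k : ℕ) (h : eqc = true) :
      LProof affine eqc Ax
        [(LForm.bang (.ndeq (v0 k) .zero)).neg, .bang (.deq (sgT.app (v0 k)) tm1)]
  | dotSub {τ} (x y z : ℕ) (A : LForm) (h : eqc = true)
      (hfx : LForm.FreeFor (Tm.var x τ) z A) (hfy : LForm.FreeFor (Tm.var y τ) z A) :
      LProof affine eqc Ax [(LForm.bang (deqAt τ (.var x τ) (.var y τ))).neg,
        (A.substTm z (Tm.var x τ)).neg, A.substTm z (Tm.var y τ)]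
  | tag0 (h : eqc = true) : LProof affine eqc Ax [.tag (sgT.app .zero)]
  | tagCon {Γ t} (h : eqc = true) :
      LProof affine eqc Ax (LForm.ntag t :: LForm.ntag t :: Γ) →
      LProof affine eqc Ax (LForm.ntag t :: Γ)
  | tagApp (x y : ℕ) (h : eqc = true) :
      LProof affine eqc Ax [.ntag (sgT.app (v0 x)), .ntag (sgT.app (v0 y)),
        .tag (sgT.app ((addT.app (v0 x)).app (v0 y)))]

/-- The linear universal quantifier `∀^lp x A :≡ ∀x (lp(x) ⊸ A)`. -/
def allLp (n : ℕ) (τ : Ty) (A : LForm) : LForm :=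
  .all n τ ((LForm.lp τ (.var n τ)).limp A)

/-- The linear existential quantifier `∃^lp x A :≡ ∃x (lp(x) ⊗ A)`. -/
def exLp (n : ℕ) (τ : Ty) (A : LForm) : LForm :=
  .ex n τ ((LForm.lp τ (.var n τ)).tensor A)

/-- The ε-guarded linear existential quantifier `∃^lp_ε x A :≡ ∃x (lp(x) ⊗ ε =₀ 0 ⊗ A)`. -/
def exLpE (e n : ℕ) (τ : Ty) (A : LForm) : LForm :=
  .ex n τ ((LForm.lp τ (.var n τ)).tensor ((LForm.eq (v0 e) .zero).tensor A))

/-- `halts(t·z) :≡ ∀u⁰ ∃v⁰ (t(⟨u⟩ * z̄v) ≠₀ 0)`. -/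
def haltsF (t z : Tm Ty1) : CForm :=
  let u := max t.maxVar z.maxVar
  let v := u + 1
  .all u 𝕆 (.ex v 𝕆
    (neqF (t.app (((seqCodeT.app z).app (v0 u)).app (v0 v))) .zero))

/-- `wit(t·z, x) :≡ ∀u⁰ ∃v⁰ (t(⟨u⟩ * z̄v) =₀ x(u)+1 ∧ ∀w <₀ v (t(⟨u⟩ * z̄w) =₀ 0))`. -/
def witF (t z x : Tm Ty1) : CForm :=
  let u := max (max t.maxVar z.maxVar) x.maxVar
  let v := u + 1
  let w := u + 2
  .all u 𝕆 (.ex v 𝕆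
    ((CForm.eq (t.app (((seqCodeT.app z).app (v0 u)).app (v0 v)))
        (Tm.app Tm.succ (x.app (v0 u)))).and
     (.all w 𝕆 ((ltF (v0 w) (v0 v)).imp
        (.eq (t.app (((seqCodeT.app z).app (v0 u)).app (v0 w))) .zero)))))

/-- `con_τ(s, t)`: the term `s` of type `comp τ` constructs the term `t` of type `τ`. -/
def conF : (τ : Ty) → Tm τ.comp → Tm τ → CForm
  | 𝕆, s, t =>
      let x := max s.maxVar t.maxVar
      (CForm.ex x 𝕆 (neqF (s.app (v0 x)) .zero)).and
        (.all x 𝕆 ((neqF (s.app (v0 x)) .zero).imp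
          (.eq (s.app (v0 x)) (Tm.app Tm.succ t))))
  | .arr ρ τ, s, t =>
      let n := max s.maxVar t.maxVar
      .all n ρ.comp (.all (n + 1) ρ
        ((conF ρ (.var n ρ.comp) (.var (n + 1) ρ)).imp
          (conF τ (s.app (.var n ρ.comp)) (t.app (.var (n + 1) ρ)))))

/-! ### Dialectica interpretation -/

/-- Iterated function type `arrows [σ₁,…,σₖ] τ = σ₁ ⤳ ⋯ ⤳ σₖ ⤳ τ`. -/
def arrows (args : List Ty) (τ : Ty) : Ty := args.foldr Ty.arr τ

/-- Abstract each type in `l` over the argument types `args`. -/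
def absTys (args : List Ty) (l : List Ty) : List Ty := l.map (arrows args)

/-- Witness and counterexample type tuples of the Dialectica interpretation,
parametrized by the witness type `lpW τ` assigned to the linear predicate `lp_τ`. -/
def wcty (lpW : Ty → Ty) : LForm → List Ty × List Ty
  | .lp τ _ => ([lpW τ], [])
  | .nlp τ _ => ([], [lpW τ])
  | .tensor A B =>
      ((wcty lpW A).1 ++ (wcty lpW B).1,
       absTys (wcty lpW B).1 (wcty lpW A).2 ++ absTys (wcty lpW A).1 (wcty lpW B).2)
  | .par A B =>
      (absTys (wcty lpW B).2 (wcty lpW A).1 ++ absTys (wcty lpW A).2 (wcty lpW B).1,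
       (wcty lpW A).2 ++ (wcty lpW B).2)
  | .oplus A B =>
      ((wcty lpW A).1 ++ ((wcty lpW B).1 ++ [𝕆]), (wcty lpW A).2 ++ (wcty lpW B).2)
  | .withC A B =>
      ((wcty lpW A).1 ++ (wcty lpW B).1, (wcty lpW A).2 ++ ((wcty lpW B).2 ++ [𝕆]))
  | .bang A => ((wcty lpW A).1, [])
  | .quest A => ([], (wcty lpW A).2)
  | .all _ _ A => wcty lpW A
  | .ex _ _ A => wcty lpW A
  | _ => ([], [])

/-- Witness types of `A`. -/
abbrev wty (lpW : Ty → Ty) (A : LForm) : List Ty := (wcty lpW A).1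
/-- Counterexample types of `A`. -/
abbrev cty (lpW : Ty → Ty) (A : LForm) : List Ty := (wcty lpW A).2

/-- Heterogeneous tuples of terms. -/
inductive Tms : List Ty → Type
  | nil : Tms []
  | cons {τ l} : Tm τ → Tms l → Tms (τ :: l)

/-- Left part of a split tuple. -/
def Tms.splitl : {l l' : List Ty} → Tms (l ++ l') → Tms l
  | [], _, _ => .nil
  | _ :: _, _, .cons a u => .cons a (Tms.splitl u)

/-- Right part of a split tuple. -/
def Tms.splitr : {l l' : List Ty} → Tms (l ++ l') → Tms l'
  | [], _, v => v
  | _ :: _, _, .cons _ u => Tms.splitr u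

/-- Head of a nonempty tuple. -/
def Tms.hd : {τ : Ty} → {l : List Ty} → Tms (τ :: l) → Tm τ
  | _, _, .cons a _ => a

/-- Apply a term of iterated function type to a tuple of arguments. -/
def appAll : {args : List Ty} → {τ : Ty} → Tm (arrows args τ) → Tms args → Tm τ
  | [], _, t, _ => t
  | _ :: _, _, t, .cons u us => appAll (t.app u) us

/-- Apply each member of a tuple of functionals to the same argument tuple. -/
def appEach : {l : List Ty} → {args : List Ty} → Tms (absTys args l) → Tms args → Tms l
  | [], _, _, _ => .nil
  | _ :: _, _, .cons f fs, us => .cons (appAll f us) (appEach fs us)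

/-- The tuple of variables with indices `n, n+1, …` and types from `l`. -/
def varTms : (l : List Ty) → ℕ → Tms l
  | [], _ => .nil
  | τ :: l, n => .cons (.var n τ) (varTms l (n + 1))

/-- The tuple of variables with indices `g 0, g 1, …` and types from `l`. -/
def mkVarTms : (l : List Ty) → (ℕ → ℕ) → Tms l
  | [], _ => .nil
  | τ :: l, g => .cons (.var (g 0) τ) (mkVarTms l (fun k => g (k + 1)))

/-- Universal quantifier prefix over fresh variables `n, n+1, …` of types `l`. -/
def allPre : (l : List Ty) → ℕ → LForm → LForm
  | [], _, A => A
  | τ :: l, n, A => .all n τ (allPre l (n + 1) A)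

/-- Existential quantifier prefix over fresh variables `n, n+1, …` of types `l`. -/
def exPre : (l : List Ty) → ℕ → LForm → LForm
  | [], _, A => A
  | τ :: l, n, A => .ex n τ (exPre l (n + 1) A)

/-- Free variables of a tuple of terms. -/
def Tms.fvars : {l : List Ty} → Tms l → Set (ℕ × Ty)
  | _, .nil => ∅
  | _, .cons a u => a.fvars ∪ u.fvars

/-- A strict upper bound for all variable indices occurring in a tuple. -/
def Tms.maxVar : {l : List Ty} → Tms l → ℕ
  | _, .nil => 0
  | _, .cons a u => max a.maxVar u.maxVar

/-- Gödel's Dialectica interpretation `|A|^w_c` for linear logic with linear predicate,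
parametrized by the interpretation `lpI` of the linear predicate
(`|lp_τ(t)|^x :≡ lpI τ t x`). -/
def dia (lpW : Ty → Ty) (lpI : (τ : Ty) → Tm τ → Tm (lpW τ) → LForm) :
    (A : LForm) → Tms (wty lpW A) → Tms (cty lpW A) → LForm
  | .one, _, _ => .one
  | .zer, _, _ => .zer
  | .top, _, _ => .top
  | .bot, _, _ => .bot
  | .eq s t, _, _ => .eq s t
  | .neq s t, _, _ => .neq s t
  | .deq s t, _, _ => .deq s t
  | .ndeq s t, _, _ => .ndeq s t
  | .tag t, _, _ => .tag t
  | .ntag t, _, _ => .ntag t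
  | .ph, _, _ => .ph
  | .nph, _, _ => .nph
  | .lp τ t, w, _ => lpI τ t (Tms.hd w)
  | .nlp τ t, _, c => (lpI τ t (Tms.hd c)).neg
  | .tensor A B, w, c =>
      let x := Tms.splitl (l := wty lpW A) (l' := wty lpW B) w
      let u := Tms.splitr (l := wty lpW A) (l' := wty lpW B) w
      let f := Tms.splitl (l := absTys (wty lpW B) (cty lpW A))
        (l' := absTys (wty lpW A) (cty lpW B)) c
      let g := Tms.splitr (l := absTys (wty lpW B) (cty lpW A))
        (l' := absTys (wty lpW A) (cty lpW B)) c
      (dia lpW lpI A x (appEach f u)).tensor (dia lpW lpI B u (appEach g x))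
  | .par A B, w, c =>
      let f := Tms.splitl (l := absTys (cty lpW B) (wty lpW A))
        (l' := absTys (cty lpW A) (wty lpW B)) w
      let g := Tms.splitr (l := absTys (cty lpW B) (wty lpW A))
        (l' := absTys (cty lpW A) (wty lpW B)) w
      let x := Tms.splitl (l := cty lpW A) (l' := cty lpW B) c
      let u := Tms.splitr (l := cty lpW A) (l' := cty lpW B) c
      (dia lpW lpI A (appEach f u) x).par (dia lpW lpI B (appEach g x) u)
  | .oplus A B, w, c =>
      let x := Tms.splitl (l := wty lpW A) (l' := wty lpW B ++ [𝕆]) w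
      let r := Tms.splitr (l := wty lpW A) (l' := wty lpW B ++ [𝕆]) w
      let u := Tms.splitl (l := wty lpW B) (l' := [𝕆]) r
      let k0 := Tms.hd (Tms.splitr (l := wty lpW B) (l' := [𝕆]) r)
      let y := Tms.splitl (l := cty lpW A) (l' := cty lpW B) c
      let v := Tms.splitr (l := cty lpW A) (l' := cty lpW B) c
      ((LForm.bang (.deq k0 .zero)).tensor (dia lpW lpI A x y)).oplus
        ((LForm.bang (.ndeq k0 .zero)).tensor (dia lpW lpI B u v))
  | .withC A B, w, c =>
      let x := Tms.splitl (l := wty lpW A) (l' := wty lpW B) w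
      let u := Tms.splitr (l := wty lpW A) (l' := wty lpW B) w
      let y := Tms.splitl (l := cty lpW A) (l' := cty lpW B ++ [𝕆]) c
      let r := Tms.splitr (l := cty lpW A) (l' := cty lpW B ++ [𝕆]) c
      let v := Tms.splitl (l := cty lpW B) (l' := [𝕆]) r
      let k0 := Tms.hd (Tms.splitr (l := cty lpW B) (l' := [𝕆]) r)
      ((LForm.bang (.deq k0 .zero)).limp (dia lpW lpI A x y)).withC
        ((LForm.bang (.ndeq k0 .zero)).limp (dia lpW lpI B u v))
  | .bang A, w, _ =>
      let n := max A.maxVar w.maxVar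
      .bang (allPre (cty lpW A) n (dia lpW lpI A w (varTms (cty lpW A) n)))
  | .quest A, _, c =>
      let n := max A.maxVar c.maxVar
      .quest (exPre (wty lpW A) n (dia lpW lpI A (varTms (wty lpW A) n) c))
  | .all m τ A, w, c => .all m τ (dia lpW lpI A w c)
  | .ex m τ A, w, c => .ex m τ (dia lpW lpI A w c)

/-- The tagging interpretation of the linear predicate:
`|lp_τ(t)|^{x⁰} :≡ lp_τ(t) ⊗ □(sg x)`. -/
def lpWTag : Ty → Ty := fun _ => 𝕆
/-- The tagging interpretation of the linear predicate. -/
def lpITag : (τ : Ty) → Tm τ → Tm 𝕆 → LForm :=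
  fun τ t x => (LForm.lp τ t).tensor (.tag (sgT.app x))

/-- The computability interpretation of the linear predicate:
`|lp_τ(t)|^{x^{comp τ}} :≡ (con_τ(x, t))^L`. -/
def lpWCon : Ty → Ty := Ty.comp
/-- The computability interpretation of the linear predicate. -/
def lpICon : (τ : Ty) → Tm τ → Tm τ.comp → LForm :=
  fun τ t x => (conF τ x t).emb

/-! ### Standard model and simple phase semantics -/

/-- Set-theoretic denotation of the finite types (the full standard model). -/
def Ty.den : Ty → Type
  | 𝕆 => ℕ
  | .arr σ τ => σ.den → τ.den

/-- Default element of each type. -/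
def Ty.dflt : (τ : Ty) → τ.den
  | 𝕆 => (0 : ℕ)
  | .arr _ τ => fun _ => τ.dflt

/-- Variable environments for the standard model. -/
def Env : Type := (n : ℕ) → (τ : Ty) → τ.den

/-- The default environment. -/
def Env.default : Env := fun _ τ => τ.dflt

/-- Update an environment at a variable. -/
def Env.upd (e : Env) (n : ℕ) {σ : Ty} (a : σ.den) : Env :=
  fun m ρ => if h : m = n ∧ ρ = σ then (by rw [h.2]; exact a) else e m ρ

/-- Denotation of terms in the standard model. -/
def Tm.den : {τ : Ty} → Tm τ → Env → τ.den
  | _, .var n τ, e => e n τ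
  | _, .zero, _ => (0 : ℕ)
  | _, .succ, _ => Nat.succ
  | _, .K _ _, _ => fun a _ => a
  | _, .S _ _ _, _ => fun x y z => x z (y z)
  | _, .R _, _ => fun y z n => Nat.rec y (fun m ih => z m ih) n
  | _, .lam n σ t, e => fun a => Tm.den t (e.upd n (σ := σ) a)
  | _, .app f a, e => (Tm.den f e) (Tm.den a e)

/-- Variable assignments: every variable of type `τ` is mapped to a closed term of type `τ`
(closedness is a separate hypothesis). -/
def Assg : Type := (n : ℕ) → (τ : Ty) → Tm τ

/-- The environment induced by an assignment. -/
def Assg.env (β : Assg) : Env := fun n τ => (β n τ).den Env.default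

/-- Update an assignment at a variable. -/
def Assg.upd (β : Assg) (n : ℕ) {σ : Ty} (s : Tm σ) : Assg :=
  fun m ρ => if h : m = n ∧ ρ = σ then (by rw [h.2]; exact s) else β m ρ

/-- Numerical value of a term of type `0` under an assignment. -/
def Assg.val (β : Assg) (t : Tm 𝕆) : ℕ := t.den β.env

/-- The phase space `P = {0, 1}` is modelled by `Bool` with multiplication `&&`;
the set of antiphases is `{1} = {true}`.  `pol Q = Q^⊥`. -/
def pol (Q : Set Bool) : Set Bool := {p | ∀ q ∈ Q, (p && q) = true}

/-- Simple phase semantics for `ELPAω_eq` over the phase space `{0,1}`.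
`tagPos` is the fixed choice (`∅` or `{0,1}`) of the semantics of `□(t)` for
positive values of `t`. -/
def sem (tagPos : Set Bool) : LForm → Assg → Set Bool
  | .one, _ => {true}
  | .bot, _ => pol {true}
  | .top, _ => Set.univ
  | .zer, _ => pol Set.univ
  | .eq _ _, _ => {true}
  | .neq _ _, _ => pol {true}
  | .lp _ _, _ => {true}
  | .nlp _ _, _ => pol {true}
  | .ph, _ => {true}
  | .nph, _ => pol {true}
  | .deq s t, β => if β.val s = β.val t then Set.univ else ∅
  | .ndeq s t, β => pol (if β.val s = β.val t then Set.univ else ∅)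
  | .tag t, β => if β.val t = 0 then {true} else tagPos
  | .ntag t, β => pol (if β.val t = 0 then {true} else tagPos)
  | .tensor A B, β => {p | ∃ a ∈ sem tagPos A β, ∃ b ∈ sem tagPos B β, p = (a && b)}
  | .withC A B, β => sem tagPos A β ∪ sem tagPos B β
  | .quest A, β => sem tagPos A β ∪ {true}
  | .all n σ A, β => ⋂ (s : {t : Tm σ // t.Closed}), sem tagPos A (β.upd n s.1)
  | .par A B, β =>
      pol {p | ∃ a ∈ pol (sem tagPos A β), ∃ b ∈ pol (sem tagPos B β), p = (a && b)}
  | .oplus A B, β => pol (pol (sem tagPos A β) ∪ pol (sem tagPos B β))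
  | .bang A, β => pol (pol (sem tagPos A β) ∪ {true})
  | .ex n σ A, β =>
      pol (⋂ (s : {t : Tm σ // t.Closed}), pol (sem tagPos A (β.upd n s.1)))

/-- `0 =₀ 0`. -/
def eq00 : CForm := .eq .zero .zero
/-- `1 =₀ 0`. -/
def eq10 : CForm := .eq tm1 .zero

/-- The collapse of linear formulas to classical formulas:
`1, ⊤, lp, □ ↦ 0=0`; `0, ⊥ ↦ 1=0`; `⊗, & ↦ ∧`; `⅋, ⊕ ↦ ∨`; `≐ ↦ =`;
linear negation `↦ ¬`; the modalities are omitted. -/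
def LForm.collapse : LForm → CForm
  | .one => eq00
  | .top => eq00
  | .lp _ _ => eq00
  | .tag _ => eq00
  | .ph => eq00
  | .zer => eq10
  | .bot => eq10
  | .eq s t => .eq s t
  | .deq s t => .eq s t
  | .neq s t => .not (.eq s t)
  | .ndeq s t => .not (.eq s t)
  | .nlp _ _ => .not eq00
  | .ntag _ => .not eq00
  | .nph => .not eq00
  | .tensor A B => .and A.collapse B.collapse
  | .withC A B => .and A.collapse B.collapse
  | .par A B => .or A.collapse B.collapse
  | .oplus A B => .or A.collapse B.collapse
  | .bang A => A.collapse
  | .quest A => A.collapse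
  | .all n τ A => .all n τ A.collapse
  | .ex n τ A => .ex n τ A.collapse

/-- The placeholder `$` occurs only positively in `A`
(after unraveling all abbreviations and involutions, `A` does not contain `$^⊥`). -/
def LForm.PosPh : LForm → Prop
  | .nph => False
  | .tensor A B => A.PosPh ∧ B.PosPh
  | .par A B => A.PosPh ∧ B.PosPh
  | .oplus A B => A.PosPh ∧ B.PosPh
  | .withC A B => A.PosPh ∧ B.PosPh
  | .bang A => A.PosPh
  | .quest A => A.PosPh
  | .all _ _ A => A.PosPh
  | .ex _ _ A => A.PosPh
  | _ => True

/-- Substitute the formula `P` for the placeholder `$` in `A`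
(and `P^⊥` for `$^⊥`). -/
def LForm.phSubst (A P : LForm) : LForm :=
  match A with
  | .ph => P
  | .nph => P.neg
  | .tensor A B => .tensor (A.phSubst P) (B.phSubst P)
  | .par A B => .par (A.phSubst P) (B.phSubst P)
  | .oplus A B => .oplus (A.phSubst P) (B.phSubst P)
  | .withC A B => .withC (A.phSubst P) (B.phSubst P)
  | .bang A => .bang (A.phSubst P)
  | .quest A => .quest (A.phSubst P)
  | .all n τ A => .all n τ (A.phSubst P)
  | .ex n τ A => .ex n τ (A.phSubst P)
  | B => B


/-! ### Shared material for statements 15–17 -/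

/-- `A_at(x,y,u,v) :≡ (t x y u v =₀ 0)` for the closed characteristic term `t`. -/
def aAt (tch : Tm (Ty1 ⤳ Ty1 ⤳ 𝕆 ⤳ 𝕆 ⤳ 𝕆)) (x y : Tm Ty1) (u v : Tm 𝕆) : CForm :=
  .eq ((((tch.app x).app y).app u).app v) .zero

/-- The code of `⟨u⟩ * z̄v`. -/
def codeAt (z : Tm Ty1) (u v : Tm 𝕆) : Tm 𝕆 := ((seqCodeT.app z).app u).app v

/-- The defining property of the characteristic term `t`:
`∀x∀y∀u∀v (t x y u v =₀ 0 ↔ (x(⟨u⟩ * ȳv) ≠₀ 0 ∧ ∀w <₀ v (x(⟨u⟩ * ȳw) =₀ 0)))`. -/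
def chSpec (tch : Tm (Ty1 ⤳ Ty1 ⤳ 𝕆 ⤳ 𝕆 ⤳ 𝕆)) : CForm :=
  .all 0 Ty1 (.all 1 Ty1 (.all 2 𝕆 (.all 3 𝕆
    (iffC (aAt tch (.var 0 Ty1) (.var 1 Ty1) (v0 2) (v0 3))
      ((neqF ((Tm.var 0 Ty1).app (codeAt (.var 1 Ty1) (v0 2) (v0 3))) .zero).and
        (.all 4 𝕆 ((ltF (v0 4) (v0 3)).imp
          (.eq ((Tm.var 0 Ty1).app (codeAt (.var 1 Ty1) (v0 2) (v0 4))) .zero))))))))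



/-! ### Auxiliary development -/

variable {Ax : Set CForm}

theorem CProof.wkLs (Ξ : List CForm) {Γ Δ} (p : CProof Ax Γ Δ) : CProof Ax (Ξ ++ Γ) Δ := by
  induction Ξ with
  | nil => exact p
  | cons A Ξ' ih => exact ih.wkL A

theorem CProof.wkRs (Ξ : List CForm) {Γ Δ} (p : CProof Ax Γ Δ) : CProof Ax Γ (Ξ ++ Δ) := by
  induction Ξ with
  | nil => exact p
  | cons A Ξ' ih => exact ih.wkR A

theorem CProof.idW {A : CForm} {Γ Δ} : CProof Ax (A :: Γ) (A :: Δ) := by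
  have h1 : CProof Ax [A] (A :: Δ) :=
    ((CProof.id (Ax := Ax) A).wkRs Δ).permR (List.perm_append_singleton _ _)
  exact (h1.wkLs Γ).permL (List.perm_append_singleton _ _)

theorem CProof.conLsAux {Γ Δ} (Ξ : List CForm) (p : CProof Ax (Γ ++ Γ ++ Ξ) Δ) :
    CProof Ax (Γ ++ Ξ) Δ := by
  induction Γ generalizing Ξ with
  | nil => simpa using p
  | cons A Γ' ih =>
    have e1 : (A :: Γ') ++ (A :: Γ') ++ Ξ = A :: (Γ' ++ (A :: (Γ' ++ Ξ))) := by simp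
    have h1 : (A :: (Γ' ++ (A :: (Γ' ++ Ξ)))).Perm (A :: A :: (Γ' ++ Γ' ++ Ξ)) := by
      refine List.Perm.cons _ (List.perm_middle.trans ?_)
      simp
    have p1 : CProof Ax (A :: A :: (Γ' ++ Γ' ++ Ξ)) Δ := p.permL (by rw [e1] at p ⊢; exact h1)
    have h2 : (A :: (Γ' ++ Γ' ++ Ξ)).Perm (Γ' ++ Γ' ++ (A :: Ξ)) := by
      have : (A :: (Γ' ++ (Γ' ++ Ξ))).Perm (Γ' ++ (Γ' ++ (A :: Ξ))) :=
        (List.perm_middle.symm.trans (List.Perm.append_left _ List.perm_middle.symm))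
      simpa using this
    have p3 : CProof Ax (Γ' ++ Γ' ++ (A :: Ξ)) Δ := p1.conL.permL h2
    refine (ih _ p3).permL (List.perm_middle.trans ?_)
    simp
theorem CProof.conLs {Γ Δ} (p : CProof Ax (Γ ++ Γ) Δ) : CProof Ax Γ Δ := by
  simpa using CProof.conLsAux [] (by simpa using p)

theorem CProof.conRsAux {Γ Δ} (Ξ : List CForm) (p : CProof Ax Γ (Δ ++ Δ ++ Ξ)) :
    CProof Ax Γ (Δ ++ Ξ) := by
  induction Δ generalizing Ξ with
  | nil => simpa using p
  | cons A Δ' ih =>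
    have e1 : (A :: Δ') ++ (A :: Δ') ++ Ξ = A :: (Δ' ++ (A :: (Δ' ++ Ξ))) := by simp
    have h1 : (A :: (Δ' ++ (A :: (Δ' ++ Ξ)))).Perm (A :: A :: (Δ' ++ Δ' ++ Ξ)) := by
      refine List.Perm.cons _ (List.perm_middle.trans ?_)
      simp
    have p1 : CProof Ax Γ (A :: A :: (Δ' ++ Δ' ++ Ξ)) := p.permR (by rw [e1] at p ⊢; exact h1)
    have h2 : (A :: (Δ' ++ Δ' ++ Ξ)).Perm (Δ' ++ Δ' ++ (A :: Ξ)) := by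
      have : (A :: (Δ' ++ (Δ' ++ Ξ))).Perm (Δ' ++ (Δ' ++ (A :: Ξ))) :=
        (List.perm_middle.symm.trans (List.Perm.append_left _ List.perm_middle.symm))
      simpa using this
    have p3 : CProof Ax Γ (Δ' ++ Δ' ++ (A :: Ξ)) := p1.conR.permR h2
    refine (ih _ p3).permR (List.perm_middle.trans ?_)
    simp
theorem CProof.conRs {Γ Δ} (p : CProof Ax Γ (Δ ++ Δ)) : CProof Ax Γ Δ := by
  simpa using CProof.conRsAux [] (by simpa using p)

/-- context-preserving cut -/
theorem CProof.cutC {Γ Δ A} (p : CProof Ax Γ (A :: Δ)) (q : CProof Ax (A :: Γ) Δ) :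
    CProof Ax Γ Δ := (p.cut q).conLs.conRs

/-- modus ponens in the succedent -/
theorem CProof.mpC {Γ Δ : List CForm} {A B} (pab : CProof Ax Γ ((A.imp B) :: Δ))
    (pa : CProof Ax Γ (A :: Δ)) : CProof Ax Γ (B :: Δ) := by
  have q : CProof Ax ((A.imp B) :: Γ) (B :: Δ) :=
    CProof.impL ((pa.wkR B).permR (List.Perm.swap _ _ _)) CProof.idW
  have r := (pab.cut q).conLs
  have r2 : CProof Ax Γ ((Δ ++ Δ) ++ [B]) := r.permR
    (List.perm_middle.trans (List.perm_append_singleton _ _).symm)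
  exact (CProof.conRsAux [B] r2).permR (List.perm_append_singleton _ _)

/-- cut preserving contexts and an extra succedent formula -/
theorem CProof.cutC' {Γ Δ : List CForm} {A B} (p : CProof Ax Γ (A :: Δ))
    (q : CProof Ax (A :: Γ) (B :: Δ)) : CProof Ax Γ (B :: Δ) := by
  have r := (p.cut q).conLs
  have r2 : CProof Ax Γ ((Δ ++ Δ) ++ [B]) := r.permR
    (List.perm_middle.trans (List.perm_append_singleton _ _).symm)
  exact (CProof.conRsAux [B] r2).permR (List.perm_append_singleton _ _)

/-- extract left conjunct -/
theorem CProof.andE1 {Γ Δ A B} (p : CProof Ax Γ ((CForm.and A B) :: Δ)) :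
    CProof Ax Γ (A :: Δ) :=
  p.cutC' (CProof.andL CProof.idW)

/-- extract right conjunct -/
theorem CProof.andE2 {Γ Δ A B} (p : CProof Ax Γ ((CForm.and A B) :: Δ)) :
    CProof Ax Γ (B :: Δ) :=
  p.cutC' (CProof.andL (CProof.idW.permL (List.Perm.swap _ _ _)))

/-- instantiate a universal in the succedent -/
theorem CProof.specAll {Γ Δ n σ A} (t : Tm σ) (hff : CForm.FreeFor t n A)
    (p : CProof Ax Γ ((CForm.all n σ A) :: Δ)) : CProof Ax Γ ((A.substTm n t) :: Δ) :=
  p.cutC' (CProof.allL t hff CProof.idW)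

/-- weaken a nil-context proof into any context -/
theorem CProof.ofNil {Γ Δ A} (p : CProof Ax [] [A]) : CProof Ax Γ (A :: Δ) := by
  have h1 : CProof Ax [] (A :: Δ) := (p.wkRs Δ).permR (List.perm_append_singleton _ _)
  exact (h1.wkLs Γ).permL (by simp)

/-! ### bound variables and `FreeFor` -/

/-- Bound variables of a term. -/
def Tm.bv : {τ : Ty} → Tm τ → Set (ℕ × Ty)
  | _, .lam m ρ t => insert (m, ρ) t.bv
  | _, .app f a => f.bv ∪ a.bv
  | _, _ => ∅

theorem Tm.freeForIn_of_disjoint {σ : Ty} {s : Tm σ} {n : ℕ} :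
    ∀ {τ : Ty} {t : Tm τ}, (∀ p ∈ t.bv, p ∉ s.fvars) → s.FreeForIn n t := by
  intro τ t
  induction t with
  | lam m ρ t ih =>
    intro h
    exact Or.inr (Or.inr ⟨h (m, ρ) (by simp [Tm.bv]),
      ih (fun p hp => h p (by simp [Tm.bv]; exact Or.inr hp))⟩)
  | app f a ihf iha =>
    intro h
    exact ⟨ihf (fun p hp => h p (by simp [Tm.bv]; exact Or.inl hp)),
      iha (fun p hp => h p (by simp [Tm.bv]; exact Or.inr hp))⟩
  | var m ρ => intro _; trivial
  | zero => intro _; trivial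
  | succ => intro _; trivial
  | K _ _ => intro _; trivial
  | S _ _ _ => intro _; trivial
  | R _ => intro _; trivial

/-- (Formula-level) bound variables of a classical formula. -/
def CForm.bv : CForm → Set (ℕ × Ty)
  | .eq _ _ => ∅
  | .not A => A.bv
  | .and A B => A.bv ∪ B.bv
  | .or A B => A.bv ∪ B.bv
  | .imp A B => A.bv ∪ B.bv
  | .all n τ A => insert (n, τ) A.bv
  | .ex n τ A => insert (n, τ) A.bv

theorem CForm.freeFor_of_disjoint {σ : Ty} {s : Tm σ} {n : ℕ} :
    ∀ {A : CForm}, (∀ p ∈ A.bv, p ∉ s.fvars) → CForm.FreeFor s n A := by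
  intro A
  induction A with
  | eq _ _ => intro _; trivial
  | not A ih => intro h; exact ih h
  | and A B iha ihb =>
    intro h
    exact ⟨iha (fun p hp => h p (by simp [CForm.bv]; exact Or.inl hp)),
      ihb (fun p hp => h p (by simp [CForm.bv]; exact Or.inr hp))⟩
  | or A B iha ihb =>
    intro h
    exact ⟨iha (fun p hp => h p (by simp [CForm.bv]; exact Or.inl hp)),
      ihb (fun p hp => h p (by simp [CForm.bv]; exact Or.inr hp))⟩
  | imp A B iha ihb =>
    intro h
    exact ⟨iha (fun p hp => h p (by simp [CForm.bv]; exact Or.inl hp)),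
      ihb (fun p hp => h p (by simp [CForm.bv]; exact Or.inr hp))⟩
  | all m τ A ih =>
    intro h
    exact Or.inr ⟨h (m, τ) (by simp [CForm.bv]),
      ih (fun p hp => h p (by simp [CForm.bv]; exact Or.inr hp))⟩
  | ex m τ A ih =>
    intro h
    exact Or.inr ⟨h (m, τ) (by simp [CForm.bv]),
      ih (fun p hp => h p (by simp [CForm.bv]; exact Or.inr hp))⟩

/-- Bound variables of a linear formula. -/
def LForm.bv : LForm → Set (ℕ × Ty)
  | .tensor A B => A.bv ∪ B.bv
  | .par A B => A.bv ∪ B.bv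
  | .oplus A B => A.bv ∪ B.bv
  | .withC A B => A.bv ∪ B.bv
  | .bang A => A.bv
  | .quest A => A.bv
  | .all n τ A => insert (n, τ) A.bv
  | .ex n τ A => insert (n, τ) A.bv
  | _ => ∅

theorem LForm.freeFor_of_disjoint {σ : Ty} {s : Tm σ} {n : ℕ} :
    ∀ {A : LForm}, (∀ p ∈ A.bv, p ∉ s.fvars) → LForm.FreeFor s n A := by
  intro A
  induction A with
  | tensor A B iha ihb =>
    intro h
    exact ⟨iha (fun p hp => h p (by simp [LForm.bv]; exact Or.inl hp)),
      ihb (fun p hp => h p (by simp [LForm.bv]; exact Or.inr hp))⟩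
  | par A B iha ihb =>
    intro h
    exact ⟨iha (fun p hp => h p (by simp [LForm.bv]; exact Or.inl hp)),
      ihb (fun p hp => h p (by simp [LForm.bv]; exact Or.inr hp))⟩
  | oplus A B iha ihb =>
    intro h
    exact ⟨iha (fun p hp => h p (by simp [LForm.bv]; exact Or.inl hp)),
      ihb (fun p hp => h p (by simp [LForm.bv]; exact Or.inr hp))⟩
  | withC A B iha ihb =>
    intro h
    exact ⟨iha (fun p hp => h p (by simp [LForm.bv]; exact Or.inl hp)),
      ihb (fun p hp => h p (by simp [LForm.bv]; exact Or.inr hp))⟩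
  | bang A ih => intro h; exact ih h
  | quest A ih => intro h; exact ih h
  | all m τ A ih =>
    intro h
    exact Or.inr ⟨h (m, τ) (by simp [LForm.bv]),
      ih (fun p hp => h p (by simp [LForm.bv]; exact Or.inr hp))⟩
  | ex m τ A ih =>
    intro h
    exact Or.inr ⟨h (m, τ) (by simp [LForm.bv]),
      ih (fun p hp => h p (by simp [LForm.bv]; exact Or.inr hp))⟩
  | one => intro _; trivial
  | zer => intro _; trivial
  | top => intro _; trivial
  | bot => intro _; trivial
  | eq _ _ => intro _; trivial
  | neq _ _ => intro _; trivial
  | lp _ _ => intro _; trivial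
  | nlp _ _ => intro _; trivial
  | deq _ _ => intro _; trivial
  | ndeq _ _ => intro _; trivial
  | tag _ => intro _; trivial
  | ntag _ => intro _; trivial
  | ph => intro _; trivial
  | nph => intro _; trivial

/-- Substitution for a variable not free in the term is the identity. -/
theorem Tm.subst_fresh {σ : Ty} {s : Tm σ} {n : ℕ} :
    ∀ {τ : Ty} {t : Tm τ}, (n, σ) ∉ t.fvars → t.subst n s = t := by
  intro τ t
  induction t with
  | var m ρ =>
    intro h
    have : ¬(m = n ∧ ρ = σ) := by
      rintro ⟨rfl, rfl⟩; exact h (by simp [Tm.fvars])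
    simp [Tm.subst, this]
  | zero => intro _; rfl
  | succ => intro _; rfl
  | K _ _ => intro _; rfl
  | S _ _ _ => intro _; rfl
  | R _ => intro _; rfl
  | lam m ρ t ih =>
    intro h
    by_cases hc : m = n ∧ ρ = σ
    · simp [Tm.subst, hc]
    · have h' : (n, σ) ∉ t.fvars := by
        intro hmem
        refine h ?_
        simp [Tm.fvars]
        refine ⟨hmem, ?_⟩
        intro he hte
        exact hc ⟨he.symm, hte.symm⟩
      simp [Tm.subst, hc, ih h']
  | app f a ihf iha =>
    intro h
    simp [Tm.fvars] at h
    simp [Tm.subst, ihf h.1, iha h.2]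

theorem Tm.freeForIn_of {σ : Ty} {s : Tm σ} {n : ℕ} :
    ∀ {τ : Ty} {t : Tm τ}, (∀ p ∈ t.bv, p = (n, σ) ∨ p ∉ s.fvars) → s.FreeForIn n t := by
  intro τ t
  induction t with
  | lam m ρ t ih =>
    intro h
    by_cases hc : ((m : ℕ), ρ) = ((n : ℕ), σ)
    · exact Or.inr (Or.inl ⟨congrArg Prod.fst hc, congrArg Prod.snd hc⟩)
    · rcases h (m, ρ) (by simp [Tm.bv]) with h1 | h2
      · exact absurd h1 hc
      · exact Or.inr (Or.inr ⟨h2, ih (fun p hp => h p (by simp [Tm.bv]; exact Or.inr hp))⟩)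
  | app f a ihf iha =>
    intro h
    exact ⟨ihf (fun p hp => h p (by simp [Tm.bv]; exact Or.inl hp)),
      iha (fun p hp => h p (by simp [Tm.bv]; exact Or.inr hp))⟩
  | var m ρ => intro _; trivial
  | zero => intro _; trivial
  | succ => intro _; trivial
  | K _ _ => intro _; trivial
  | S _ _ _ => intro _; trivial
  | R _ => intro _; trivial



theorem eqReflT (t : Tm 𝕆) {Γ Δ} : CProof EPA Γ ((CForm.eq t t) :: Δ) := by
  have p0 : CProof EPA [] [.eq (v0 50) (v0 50)] := .ax (EPAAx.eqRefl 50)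
  have p1 : CProof EPA [] [.all 50 𝕆 (.eq (v0 50) (v0 50))] :=
    p0.allR (by simp) (by simp)
  exact CProof.ofNil (p1.specAll t (by exact trivial))

theorem eqSymmT {s t : Tm 𝕆} (hs : (51, 𝕆) ∉ s.fvars) {Γ Δ}
    (p : CProof EPA Γ ((CForm.eq s t) :: Δ)) : CProof EPA Γ ((CForm.eq t s) :: Δ) := by
  have p0 : CProof EPA [] [(CForm.eq (v0 50) (v0 51)).imp (.eq (v0 51) (v0 50))] :=
    .ax (EPAAx.eqSym 50 51)
  have p1 : CProof EPA []
      [.all 50 𝕆 (.all 51 𝕆 ((CForm.eq (v0 50) (v0 51)).imp (.eq (v0 51) (v0 50))))] :=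
    (p0.allR (by simp) (by simp)).allR (by simp) (by simp)
  have p2 : CProof EPA []
      [.all 51 𝕆 ((CForm.eq s (v0 51)).imp (.eq (v0 51) s))] :=
    p1.specAll s (by exact Or.inr ⟨hs, ⟨trivial, trivial⟩⟩)
  have p3 : CProof EPA []
      [(CForm.eq (s.subst 51 t) t).imp (.eq t (s.subst 51 t))] :=
    p2.specAll t (by exact ⟨trivial, trivial⟩)
  rw [Tm.subst_fresh hs] at p3
  exact (CProof.ofNil p3).mpC p

theorem eqTransT {s t r : Tm 𝕆} (hs1 : (51, 𝕆) ∉ s.fvars) (hs2 : (52, 𝕆) ∉ s.fvars)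
    (ht2 : (52, 𝕆) ∉ t.fvars) {Γ Δ}
    (p : CProof EPA Γ ((CForm.eq s t) :: Δ)) (q : CProof EPA Γ ((CForm.eq t r) :: Δ)) :
    CProof EPA Γ ((CForm.eq s r) :: Δ) := by
  have p0 : CProof EPA [] [((CForm.eq (v0 50) (v0 51)).and (.eq (v0 51) (v0 52))).imp
      (.eq (v0 50) (v0 52))] := .ax (EPAAx.eqTrans 50 51 52)
  have p1 : CProof EPA [] [.all 50 𝕆 (.all 51 𝕆 (.all 52 𝕆
      (((CForm.eq (v0 50) (v0 51)).and (.eq (v0 51) (v0 52))).imp (.eq (v0 50) (v0 52)))))] :=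
    ((p0.allR (by simp) (by simp)).allR (by simp) (by simp)).allR (by simp) (by simp)
  have p2 : CProof EPA [] [.all 51 𝕆 (.all 52 𝕆
      (((CForm.eq s (v0 51)).and (.eq (v0 51) (v0 52))).imp (.eq s (v0 52))))] :=
    p1.specAll s (by exact Or.inr ⟨hs1, Or.inr ⟨hs2, ⟨⟨trivial, trivial⟩, trivial⟩⟩⟩)
  have p3 : CProof EPA [] [.all 52 𝕆
      (((CForm.eq (s.subst 51 t) t).and (.eq t (v0 52))).imp
        (.eq (s.subst 51 t) (v0 52)))] :=
    p2.specAll t (by exact Or.inr ⟨ht2, ⟨⟨trivial, trivial⟩, trivial⟩⟩)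
  rw [Tm.subst_fresh hs1] at p3
  have p4 : CProof EPA []
      [((CForm.eq (s.subst 52 r) (t.subst 52 r)).and (.eq (t.subst 52 r) r)).imp
        (.eq (s.subst 52 r) r)] :=
    p3.specAll r (by exact ⟨⟨trivial, trivial⟩, trivial⟩)
  rw [Tm.subst_fresh hs2, Tm.subst_fresh ht2] at p4
  exact (CProof.ofNil p4).mpC (CProof.andR p q)

theorem eqCongrSuccT {s t : Tm 𝕆} (hs : (51, 𝕆) ∉ s.fvars) {Γ Δ}
    (p : CProof EPA Γ ((CForm.eq s t) :: Δ)) :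
    CProof EPA Γ ((CForm.eq (Tm.succ.app s) (Tm.succ.app t)) :: Δ) := by
  -- first derive ⊢ ∀50∀51 (50 = 51 → succ 50 = succ 51)
  have p0 : CProof EPA [] [(CForm.eq (v0 50) (v0 51)).imp
      (((CForm.eq (Tm.succ.app (v0 50)) (Tm.succ.app (v0 50)))).imp
        (.eq (Tm.succ.app (v0 50)) (Tm.succ.app (v0 51))))] :=
    .ax (EPAAx.eqSub (.eq (Tm.succ.app (v0 50)) (Tm.succ.app (v0 52))) 52 50 51
      (by exact trivial) (by exact trivial))
  have p0' : CProof EPA [] [(CForm.eq (v0 50) (v0 51)).imp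
      (.eq (Tm.succ.app (v0 50)) (Tm.succ.app (v0 51)))] := by
    refine CProof.impR ?_
    have h1 := (CProof.ofNil (Γ := [CForm.eq (v0 50) (v0 51)])
      (Δ := ([] : List CForm)) p0).mpC CProof.idW
    exact h1.mpC (eqReflT _)
  have p1 : CProof EPA [] [.all 50 𝕆 (.all 51 𝕆 ((CForm.eq (v0 50) (v0 51)).imp
      (.eq (Tm.succ.app (v0 50)) (Tm.succ.app (v0 51)))))] :=
    (p0'.allR (by simp) (by simp)).allR (by simp) (by simp)
  have p2 : CProof EPA [] [.all 51 𝕆 ((CForm.eq s (v0 51)).imp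
      (.eq (Tm.succ.app s) (Tm.succ.app (v0 51))))] :=
    p1.specAll s (by exact Or.inr ⟨hs, ⟨trivial, trivial⟩⟩)
  have p3 : CProof EPA [] [(CForm.eq (s.subst 51 t) t).imp
      (.eq (Tm.succ.app (s.subst 51 t)) (Tm.succ.app t))] :=
    p2.specAll t (by exact ⟨trivial, trivial⟩)
  rw [Tm.subst_fresh hs] at p3
  exact (CProof.ofNil p3).mpC p



/-- the recursor functional used by `predT` -/
def zlamP : Tm (𝕆 ⤳ 𝕆 ⤳ 𝕆) := .lam 1 𝕆 (.lam 2 𝕆 (v0 1))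

theorem predSucc {Γ Δ} :
    CProof EPA Γ ((CForm.eq (predT.app (Tm.succ.app (v0 11))) (v0 11)) :: Δ) := by
  have hb1 : Tm.FreeForIn (Tm.succ.app (v0 11)) 0 (recO .zero zlamP (v0 0)) := by
    refine Tm.freeForIn_of_disjoint ?_
    intro p hp
    simp [Tm.bv, recO, zlamP] at hp
    rcases hp with h | h <;> simp [h, Tm.fvars]
  have e1 : CProof EPA Γ ((CForm.eq (predT.app (Tm.succ.app (v0 11)))
      (recO .zero zlamP (Tm.succ.app (v0 11)))) :: Δ) :=
    CProof.ofNil (.ax (EPAAx.axBeta 0 (recO .zero zlamP (v0 0)) (Tm.succ.app (v0 11)) hb1))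
  have e2 : CProof EPA Γ ((CForm.eq (recO .zero zlamP (Tm.succ.app (v0 11)))
      ((zlamP.app (v0 11)).app (recO .zero zlamP (v0 11)))) :: Δ) :=
    CProof.ofNil (.ax (EPAAx.axRS .zero zlamP (v0 11)))
  have ax3 : CProof EPA [] [.all 12 𝕆 (.eq ((zlamP.app (v0 11)).app (v0 12))
      ((Tm.lam 2 𝕆 (v0 11)).app (v0 12)))] :=
    .ax (EPAAx.axBeta 1 (Tm.lam 2 𝕆 (v0 1)) (v0 11) (by
      refine Tm.freeForIn_of_disjoint ?_
      intro p hp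
      simp [Tm.bv] at hp
      simp [hp, Tm.fvars]))
  have e3 : CProof EPA Γ ((CForm.eq ((zlamP.app (v0 11)).app (recO .zero zlamP (v0 11)))
      ((Tm.lam 2 𝕆 (v0 11)).app (recO .zero zlamP (v0 11)))) :: Δ) :=
    CProof.ofNil (ax3.specAll (recO .zero zlamP (v0 11)) (by exact trivial))
  have e4 : CProof EPA Γ ((CForm.eq ((Tm.lam 2 𝕆 (v0 11)).app (recO .zero zlamP (v0 11)))
      (v0 11)) :: Δ) :=
    CProof.ofNil (.ax (EPAAx.axBeta 2 (v0 11) (recO .zero zlamP (v0 11)) (by exact trivial)))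
  have fv : ∀ k : ℕ, k ≠ 11 → ∀ t ∈ [predT.app (Tm.succ.app (v0 11)),
      recO .zero zlamP (Tm.succ.app (v0 11)), (zlamP.app (v0 11)).app (recO .zero zlamP (v0 11)),
      (Tm.lam 2 𝕆 (v0 11)).app (recO .zero zlamP (v0 11)), v0 11], ((k : ℕ), 𝕆) ∉ t.fvars := by
    intro k hk t ht
    fin_cases ht <;> simp [Tm.fvars, predT, recO, zlamP, hk]
  refine eqTransT (fv 51 (by decide) _ (by simp)) (fv 52 (by decide) _ (by simp))
    (fv 52 (by decide) _ (by simp)) e1 ?_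
  refine eqTransT (fv 51 (by decide) _ (by simp)) (fv 52 (by decide) _ (by simp))
    (fv 52 (by decide) _ (by simp)) e2 ?_
  exact eqTransT (fv 51 (by decide) _ (by simp)) (fv 52 (by decide) _ (by simp))
    (fv 52 (by decide) _ (by simp)) e3 e4

/-- the induction formula for the predecessor lemma -/
def Apred : CForm := (neqF (v0 11) .zero).imp (.eq (v0 11) (Tm.succ.app (predT.app (v0 11))))

theorem indPred : CProof EPA [] [.all 11 𝕆 Apred] := by
  have base : CProof EPA [] [Apred.substTm 11 (Tm.zero)] := by
    show CProof EPA [] [(CForm.not (.eq .zero .zero)).imp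
      (.eq .zero (Tm.succ.app (predT.app .zero)))]
    exact CProof.impR (CProof.notL (eqReflT .zero))
  have step : CProof EPA [] [.all 11 𝕆 (Apred.imp (Apred.substTm 11 (Tm.succ.app (v0 11))))] := by
    refine CProof.allR (by simp) (by simp) ?_
    refine CProof.impR ?_
    show CProof EPA [Apred] [(CForm.not (.eq (Tm.succ.app (v0 11)) .zero)).imp
      (.eq (Tm.succ.app (v0 11)) (Tm.succ.app (predT.app (Tm.succ.app (v0 11)))))]
    refine CProof.impR ?_
    refine eqCongrSuccT (by simp [Tm.fvars, predT, recO]) ?_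
    exact eqSymmT (by simp [Tm.fvars, predT, recO]) predSucc
  have hind : CProof EPA [] [((Apred.substTm 11 (Tm.zero)).and
      (.all 11 𝕆 (Apred.imp (Apred.substTm 11 (Tm.succ.app (v0 11)))))).imp
      (.all 11 𝕆 Apred)] :=
    .ax (EPAAx.axInd Apred 11 (CForm.freeFor_of_disjoint (by simp [Apred, CForm.bv, neqF])))
  exact hind.mpC (CProof.andR base step)

/-- `N ≠ 0 → N = succ (pred N)` for any term `N`. -/
theorem predApply (N : Tm 𝕆) {Γ Δ} :
    CProof EPA Γ (((neqF N .zero).imp (.eq N (Tm.succ.app (predT.app N)))) :: Δ) :=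
  CProof.ofNil (indPred.specAll N
    (CForm.freeFor_of_disjoint (by simp [Apred, CForm.bv, neqF])))

/-- the inner body of the witness functional -/
def BW : Tm 𝕆 :=
  predT.app ((Tm.var 0 Ty1).app (codeAt (.var 1 Ty1) (v0 3) ((Tm.var 2 Ty1).app (v0 3))))
def c3W : Tm Ty1 := .lam 3 𝕆 BW
def c2W : Tm (Ty1 ⤳ Ty1) := .lam 2 Ty1 c3W
def c1W : Tm (Ty1 ⤳ Ty1 ⤳ Ty1) := .lam 1 Ty1 c2W
/-- the closed functional with `cW x y V = λu. pred (x(⟨u⟩ * ȳ(V u)))`. -/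
def cW : Tm (Ty1 ⤳ Ty1 ⤳ Ty1 ⤳ Ty1) := .lam 0 Ty1 c1W
/-- the witness term `Z = cW x y V`. -/
def ZT : Tm Ty1 := ((cW.app (.var 0 Ty1)).app (.var 1 Ty1)).app (.var 5 Ty1)
/-- `N_X := x(⟨u⟩ * ȳ(V u))` at `u = v7`. -/
def NXT : Tm 𝕆 := (Tm.var 0 Ty1).app (codeAt (.var 1 Ty1) (v0 7) ((Tm.var 5 Ty1).app (v0 7)))

/-- `BW` with `var 2` replaced by `var 5`. -/
def BWV : Tm 𝕆 :=
  predT.app ((Tm.var 0 Ty1).app (codeAt (.var 1 Ty1) (v0 3) ((Tm.var 5 Ty1).app (v0 3))))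

theorem betaChain {Γ Δ} :
    CProof EPA Γ ((CForm.eq (ZT.app (v0 7)) (predT.app NXT)) :: Δ) := by
  -- β1 : cW x ∼ c1W
  have hb1 : Tm.FreeForIn (Tm.var 0 Ty1) 0 c1W := by
    refine Tm.freeForIn_of ?_
    intro p hp
    by_cases h : p = ((0 : ℕ), Ty1)
    · exact Or.inl h
    · right; simp [Tm.fvars]; exact fun hc => h (by simp [hc])
  have ax1 : CProof EPA [] [.all 5 Ty1 (.all 6 Ty1 (.all 7 𝕆
      (.eq ((((cW.app (.var 0 Ty1)).app (.var 5 Ty1)).app (.var 6 Ty1)).app (v0 7))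
           (((c1W.app (.var 5 Ty1)).app (.var 6 Ty1)).app (v0 7)))))] :=
    .ax (EPAAx.axBeta 0 c1W (.var 0 Ty1) hb1)
  have i1 : CProof EPA [] [.all 6 Ty1 (.all 7 𝕆
      (.eq ((((cW.app (.var 0 Ty1)).app (.var 1 Ty1)).app (.var 6 Ty1)).app (v0 7))
           (((c1W.app (.var 1 Ty1)).app (.var 6 Ty1)).app (v0 7))))] :=
    ax1.specAll (.var 1 Ty1) (by exact Or.inr ⟨by simp [Tm.fvars], Or.inr
      ⟨by simp [Tm.fvars], trivial⟩⟩)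
  have i2 : CProof EPA [] [.all 7 𝕆
      (.eq ((((cW.app (.var 0 Ty1)).app (.var 1 Ty1)).app (.var 5 Ty1)).app (v0 7))
           (((c1W.app (.var 1 Ty1)).app (.var 5 Ty1)).app (v0 7)))] :=
    i1.specAll (.var 5 Ty1) (by exact Or.inr ⟨by simp [Tm.fvars], trivial⟩)
  have e1 : CProof EPA Γ ((CForm.eq (ZT.app (v0 7))
      (((c1W.app (.var 1 Ty1)).app (.var 5 Ty1)).app (v0 7))) :: Δ) :=
    CProof.ofNil (i2.specAll (v0 7) (by exact trivial))
  -- β2 : c1W y ∼ c2W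
  have hb2 : Tm.FreeForIn (Tm.var 1 Ty1) 1 c2W := by
    refine Tm.freeForIn_of_disjoint ?_
    intro p hp
    simp only [Tm.fvars, Set.mem_singleton_iff]
    rintro rfl
    simp [Tm.bv, c2W, c3W, BW, predT, codeAt, seqCodeT, recO, pairT, triT, addT] at hp
  have ax2 : CProof EPA [] [.all 5 Ty1 (.all 6 𝕆
      (.eq (((c1W.app (.var 1 Ty1)).app (.var 5 Ty1)).app (v0 6))
           ((c2W.app (.var 5 Ty1)).app (v0 6))))] :=
    .ax (EPAAx.axBeta 1 c2W (.var 1 Ty1) hb2)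
  have i3 : CProof EPA [] [.all 6 𝕆
      (.eq (((c1W.app (.var 1 Ty1)).app (.var 5 Ty1)).app (v0 6))
           ((c2W.app (.var 5 Ty1)).app (v0 6)))] :=
    ax2.specAll (.var 5 Ty1) (by exact Or.inr ⟨by simp [Tm.fvars], trivial⟩)
  have e2 : CProof EPA Γ ((CForm.eq (((c1W.app (.var 1 Ty1)).app (.var 5 Ty1)).app (v0 7))
      ((c2W.app (.var 5 Ty1)).app (v0 7))) :: Δ) :=
    CProof.ofNil (i3.specAll (v0 7) (by exact trivial))
  -- β3 : c2W V ∼ c3W[2 ↦ V]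
  have hb3 : Tm.FreeForIn (Tm.var 5 Ty1) 2 c3W := by
    refine Tm.freeForIn_of_disjoint ?_
    intro p hp
    simp only [Tm.fvars, Set.mem_singleton_iff]
    rintro rfl
    simp [Tm.bv, c3W, BW, predT, codeAt, seqCodeT, recO, pairT, triT, addT] at hp
  have ax3 : CProof EPA [] [.all 6 𝕆
      (.eq ((c2W.app (.var 5 Ty1)).app (v0 6)) ((Tm.lam 3 𝕆 BWV).app (v0 6)))] :=
    .ax (EPAAx.axBeta 2 c3W (.var 5 Ty1) hb3)
  have e3 : CProof EPA Γ ((CForm.eq ((c2W.app (.var 5 Ty1)).app (v0 7))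
      ((Tm.lam 3 𝕆 BWV).app (v0 7))) :: Δ) :=
    CProof.ofNil (ax3.specAll (v0 7) (by exact trivial))
  -- β4 : (λ3. BWV) v7 ∼ pred NXT
  have hb4 : Tm.FreeForIn (v0 7) 3 BWV := by
    refine Tm.freeForIn_of_disjoint ?_
    intro p hp
    simp only [Tm.fvars, Set.mem_singleton_iff]
    rintro rfl
    simp [Tm.bv, BWV, predT, codeAt, seqCodeT, recO, pairT, triT, addT] at hp
  have e4 : CProof EPA Γ ((CForm.eq ((Tm.lam 3 𝕆 BWV).app (v0 7)) (predT.app NXT)) :: Δ) :=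
    CProof.ofNil (.ax (EPAAx.axBeta 3 BWV (v0 7) hb4))
  have fv : ∀ k : ℕ, k ≠ 7 → ∀ t ∈ [ZT.app (v0 7),
      ((c1W.app (.var 1 Ty1)).app (.var 5 Ty1)).app (v0 7),
      (c2W.app (.var 5 Ty1)).app (v0 7), (Tm.lam 3 𝕆 BWV).app (v0 7),
      predT.app NXT], ((k : ℕ), 𝕆) ∉ t.fvars := by
    intro k hk t ht
    fin_cases ht <;>
      simp [Tm.fvars, ZT, cW, c1W, c2W, c3W, BW, BWV, NXT, predT, codeAt, seqCodeT,
        recO, hk, pairT, triT, addT]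
  refine eqTransT (fv 51 (by decide) _ (by simp)) (fv 52 (by decide) _ (by simp))
    (fv 52 (by decide) _ (by simp)) e1 ?_
  refine eqTransT (fv 51 (by decide) _ (by simp)) (fv 52 (by decide) _ (by simp))
    (fv 52 (by decide) _ (by simp)) e2 ?_
  exact eqTransT (fv 51 (by decide) _ (by simp)) (fv 52 (by decide) _ (by simp))
    (fv 52 (by decide) _ (by simp)) e3 e4



/-- The fully-instantiated `chSpec` shape. -/
def specFor (t : Tm (Ty1 ⤳ Ty1 ⤳ 𝕆 ⤳ 𝕆 ⤳ 𝕆)) (x y : Tm Ty1) (u vv : Tm 𝕆) : CForm :=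
  iffC (aAt t x y u vv)
    ((neqF (x.app (codeAt y u vv)) .zero).and
      (.all 4 𝕆 ((CForm.ex 5 𝕆
          (.eq ((addT.app (v0 4)).app (Tm.succ.app (v0 5))) vv)).imp
        (.eq (x.app (codeAt y u (v0 4))) .zero))))

/-- `A_at(x, y, v7, V v7)`. -/
def Aat7 (tch : Tm (Ty1 ⤳ Ty1 ⤳ 𝕆 ⤳ 𝕆 ⤳ 𝕆)) : CForm :=
  aAt tch (.var 0 Ty1) (.var 1 Ty1) (v0 7) ((Tm.var 5 Ty1).app (v0 7))

/-- The classical form of the interpreted `wit` statement, with witness `ZT`. -/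
def WitGoal : CForm :=
  .all 7 𝕆 (.ex 8 𝕆 ((CForm.eq ((Tm.var 0 Ty1).app (codeAt (.var 1 Ty1) (v0 7) (v0 8)))
      (Tm.succ.app (ZT.app (v0 7)))).and
    (.all 9 𝕆 ((CForm.ex 10 𝕆
        (.eq ((addT.app (v0 9)).app (Tm.succ.app (v0 10))) (v0 8))).imp
      (.eq ((Tm.var 0 Ty1).app (codeAt (.var 1 Ty1) (v0 7) (v0 9))) .zero)))))

example : WitGoal = (witF (Tm.var 0 Ty1) (Tm.var 1 Ty1) (Tm.var 6 Ty1)).substTm 6 ZT := rfl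

section Main
variable {tch : Tm (Ty1 ⤳ Ty1 ⤳ 𝕆 ⤳ 𝕆 ⤳ 𝕆)} (htc : tch.Closed)
  (hspec : CProof EPA [] [chSpec tch])
include htc hspec

theorem spec7 : CProof EPA []
    [specFor tch (.var 0 Ty1) (.var 1 Ty1) (v0 7) ((Tm.var 5 Ty1).app (v0 7))] := by
  have hfc : tch.fvars = ∅ := htc
  have htch : ∀ (n : ℕ) (σ : Ty) (s : Tm σ), tch.subst n s = tch := fun n σ s =>
    Tm.subst_fresh (by rw [hfc]; simp)
  have s0 : CProof EPA [] [.all 1 Ty1 (.all 2 𝕆 (.all 3 𝕆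
      (specFor (tch.subst 0 (Tm.var 0 Ty1)) (.var 0 Ty1) (.var 1 Ty1) (v0 2) (v0 3))))] :=
    hspec.specAll (.var 0 Ty1) (CForm.freeFor_of_disjoint (by
      intro p hp
      simp [CForm.bv, iffC, aAt, neqF, ltF, codeAt, Tm.maxVar, Tm.fvars, addT, recO] at hp ⊢
      rintro rfl
      simp at hp))
  rw [htch] at s0
  have s1 : CProof EPA [] [.all 2 𝕆 (.all 3 𝕆
      (specFor (tch.subst 1 (Tm.var 1 Ty1)) (.var 0 Ty1) (.var 1 Ty1) (v0 2) (v0 3)))] :=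
    s0.specAll (.var 1 Ty1) (CForm.freeFor_of_disjoint (by
      intro p hp
      simp [CForm.bv, specFor, iffC, neqF, Tm.fvars, aAt] at hp ⊢
      rintro rfl
      simp at hp))
  rw [htch] at s1
  have s2 : CProof EPA [] [.all 3 𝕆
      (specFor (tch.subst 2 (v0 7)) (.var 0 Ty1) (.var 1 Ty1) (v0 7) (v0 3))] :=
    s1.specAll (v0 7) (CForm.freeFor_of_disjoint (by
      intro p hp
      simp [CForm.bv, specFor, iffC, neqF, Tm.fvars, aAt] at hp ⊢
      rintro rfl
      simp at hp))
  rw [htch] at s2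
  have s3 : CProof EPA []
      [specFor (tch.subst 3 ((Tm.var 5 Ty1).app (v0 7))) (.var 0 Ty1) (.var 1 Ty1) (v0 7)
        ((Tm.var 5 Ty1).app (v0 7))] :=
    s2.specAll ((Tm.var 5 Ty1).app (v0 7)) (CForm.freeFor_of_disjoint (by
      intro p hp
      simp [CForm.bv, specFor, iffC, neqF, Tm.fvars, aAt] at hp ⊢
      rcases hp with rfl | rfl <;> simp))
  rw [htch] at s3
  exact s3

set_option maxHeartbeats 1000000 in
theorem mainC : CProof EPA
    [.all 2 𝕆 (aAt tch (.var 0 Ty1) (.var 1 Ty1) (v0 2) ((Tm.var 5 Ty1).app (v0 2)))]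
    [WitGoal] := by
  have hfc : tch.fvars = ∅ := htc
  have htch : ∀ (n : ℕ) (σ : Ty) (s : Tm σ), tch.subst n s = tch := fun n σ s =>
    Tm.subst_fresh (by rw [hfc]; simp)
  have sp := spec7 htc hspec
  -- helper: derive RHS7 from A_at in any context
  have rhs : ∀ (Γ Δ : List CForm), CProof EPA Γ (Aat7 tch :: Δ) →
      CProof EPA Γ (((neqF ((Tm.var 0 Ty1).app
          (codeAt (.var 1 Ty1) (v0 7) ((Tm.var 5 Ty1).app (v0 7)))) .zero).and
        (.all 4 𝕆 ((CForm.ex 5 𝕆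
            (.eq ((addT.app (v0 4)).app (Tm.succ.app (v0 5))) ((Tm.var 5 Ty1).app (v0 7)))).imp
          (.eq ((Tm.var 0 Ty1).app (codeAt (.var 1 Ty1) (v0 7) (v0 4))) .zero)))) :: Δ) :=
    fun Γ Δ pa => ((CProof.ofNil sp).andE1).mpC pa
  refine CProof.allR (n := 7) (σ := 𝕆) ?_ (by simp) ?_
  · intro B hB
    simp at hB
    subst hB
    simp [CForm.fvars, aAt, Tm.fvars, hfc]
  refine CProof.allL (v0 7) (by exact trivial) ?_
  have hconv : (aAt tch (.var 0 Ty1) (.var 1 Ty1) (v0 2)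
      ((Tm.var 5 Ty1).app (v0 2))).substTm 2 (v0 7) = Aat7 tch := by
    show CForm.eq (((((tch.subst 2 (v0 7)).app (.var 0 Ty1)).app (.var 1 Ty1)).app
      (v0 7)).app ((Tm.var 5 Ty1).app (v0 7))) .zero = _
    rw [htch]
    rfl
  rw [hconv]
  -- goal: [Aat7] ⊢ [ex 8 ...]
  refine CProof.exR ((Tm.var 5 Ty1).app (v0 7)) (CForm.freeFor_of_disjoint (by
    intro p hp
    simp [CForm.bv, Tm.fvars] at hp ⊢
    rcases hp with rfl | rfl <;> simp)) ?_
  show CProof EPA [Aat7 tch]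
    [(CForm.eq ((Tm.var 0 Ty1).app (codeAt (.var 1 Ty1) (v0 7) ((Tm.var 5 Ty1).app (v0 7))))
      (Tm.succ.app (ZT.app (v0 7)))).and
    (.all 9 𝕆 ((CForm.ex 10 𝕆
        (.eq ((addT.app (v0 9)).app (Tm.succ.app (v0 10))) ((Tm.var 5 Ty1).app (v0 7)))).imp
      (.eq ((Tm.var 0 Ty1).app (codeAt (.var 1 Ty1) (v0 7) (v0 9))) .zero)))]
  refine CProof.andR ?_ ?_
  · -- first conjunct : NXT = succ (ZT v7)
    have n1 : CProof EPA [Aat7 tch] [neqF NXT .zero] := by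
      have := (rhs [Aat7 tch] [] CProof.idW).andE1
      exact this
    have n2 : CProof EPA [Aat7 tch] [.eq NXT (Tm.succ.app (predT.app NXT))] :=
      (predApply NXT).mpC n1
    have n4 : CProof EPA [Aat7 tch]
        [.eq (Tm.succ.app (ZT.app (v0 7))) (Tm.succ.app (predT.app NXT))] :=
      eqCongrSuccT (by simp [Tm.fvars, ZT, cW, c1W, c2W, c3W, BW, predT, recO, codeAt,
        seqCodeT, pairT, triT, addT]) betaChain
    have n5 := eqSymmT (by simp [Tm.fvars, ZT, cW, c1W, c2W, c3W, BW, predT, recO, codeAt,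
        seqCodeT, pairT, triT, addT]) n4
    exact eqTransT (by simp [Tm.fvars, NXT, codeAt, seqCodeT, pairT, triT, addT, recO])
      (by simp [Tm.fvars, NXT, codeAt, seqCodeT, pairT, triT, addT, recO])
      (by simp [Tm.fvars, NXT, predT, recO, codeAt, seqCodeT, pairT, triT, addT]) n2 n5
  · -- second conjunct
    refine CProof.allR (n := 9) (σ := 𝕆) ?_ (by simp) ?_
    · intro B hB
      simp at hB
      subst hB
      simp [CForm.fvars, Aat7, aAt, Tm.fvars, hfc, codeAt, seqCodeT]
    refine CProof.impR ?_
    refine CProof.exL (n := 10) (σ := 𝕆) ?_ ?_ ?_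
    · intro B hB
      simp at hB
      rcases hB with rfl | rfl <;>
        simp [CForm.fvars, Aat7, aAt, Tm.fvars, hfc, codeAt, seqCodeT, addT, recO, pairT, triT, addT]
    · intro B hB
      simp at hB
      subst hB
      simp [CForm.fvars, Tm.fvars, codeAt, seqCodeT, pairT, triT, addT, recO]
    -- context [eqA, Aat7] ⊢ [eq (X code(7,9)) 0]
    have pa : CProof EPA [CForm.eq ((addT.app (v0 9)).app (Tm.succ.app (v0 10)))
        ((Tm.var 5 Ty1).app (v0 7)), Aat7 tch] [Aat7 tch] :=
      CProof.idW.permL (List.Perm.swap _ _ _)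
    have a4 := (rhs _ _ pa).andE2
    have a4' := a4.specAll (v0 9) (CForm.freeFor_of_disjoint (by
      intro p hp
      simp [CForm.bv, Tm.fvars] at hp ⊢
      subst hp
      simp))
    refine a4'.mpC ?_
    refine CProof.exR (v0 10) (by exact trivial) ?_
    exact CProof.idW

end Main



@[simp] theorem LForm.neg_neg : ∀ (A : LForm), A.neg.neg = A := by
  intro A
  induction A <;> simp_all [LForm.neg]

theorem LForm.Nonlinear.neg : ∀ {A : LForm}, A.Nonlinear → A.neg.Nonlinear := by
  intro A
  induction A <;> simp_all [LForm.neg, LForm.Nonlinear]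

theorem CForm.emb_nonlinear : ∀ (A : CForm), A.emb.Nonlinear := by
  intro A
  induction A with
  | eq s t => trivial
  | not A ih => exact ih.neg
  | and A B iha ihb => exact ⟨iha, ihb⟩
  | or A B iha ihb => exact ⟨iha, ihb⟩
  | imp A B iha ihb => exact ⟨iha.neg, ihb⟩
  | all n τ A ih => exact ih
  | ex n τ A ih => exact ih

@[simp] theorem LForm.fvars_neg : ∀ (A : LForm), A.neg.fvars = A.fvars := by
  intro A
  induction A <;> simp_all [LForm.neg, LForm.fvars]

@[simp] theorem CForm.fvars_emb : ∀ (A : CForm), A.emb.fvars = A.fvars := by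
  intro A
  induction A <;> simp_all [CForm.emb, LForm.fvars, CForm.fvars]

theorem LForm.FreeFor.neg {σ : Ty} {s : Tm σ} {n : ℕ} :
    ∀ {A : LForm}, LForm.FreeFor s n A → LForm.FreeFor s n A.neg := by
  intro A
  induction A with
  | tensor A B iha ihb => exact fun h => ⟨iha h.1, ihb h.2⟩
  | par A B iha ihb => exact fun h => ⟨iha h.1, ihb h.2⟩
  | oplus A B iha ihb => exact fun h => ⟨iha h.1, ihb h.2⟩
  | withC A B iha ihb => exact fun h => ⟨iha h.1, ihb h.2⟩
  | bang A ih => exact ih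
  | quest A ih => exact ih
  | all m τ A ih =>
    intro h
    rcases h with h | ⟨h1, h2⟩
    · exact Or.inl (by simpa [LForm.fvars_neg] using h)
    · exact Or.inr ⟨h1, ih h2⟩
  | ex m τ A ih =>
    intro h
    rcases h with h | ⟨h1, h2⟩
    · exact Or.inl (by simpa [LForm.fvars_neg] using h)
    · exact Or.inr ⟨h1, ih h2⟩
  | _ => exact fun _ => trivial

theorem CForm.FreeFor.emb {σ : Ty} {s : Tm σ} {n : ℕ} :
    ∀ {A : CForm}, CForm.FreeFor s n A → LForm.FreeFor s n A.emb := by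
  intro A
  induction A with
  | eq _ _ => exact fun _ => trivial
  | not A ih => exact fun h => (ih h).neg
  | and A B iha ihb => exact fun h => ⟨iha h.1, ihb h.2⟩
  | or A B iha ihb => exact fun h => ⟨iha h.1, ihb h.2⟩
  | imp A B iha ihb => exact fun h => ⟨(iha h.1).neg, ihb h.2⟩
  | all m τ A ih =>
    intro h
    rcases h with h | ⟨h1, h2⟩
    · exact Or.inl (by simpa [CForm.fvars_emb] using h)
    · exact Or.inr ⟨h1, ih h2⟩
  | ex m τ A ih =>
    intro h
    rcases h with h | ⟨h1, h2⟩
    · exact Or.inl (by simpa [CForm.fvars_emb] using h)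
    · exact Or.inr ⟨h1, ih h2⟩

theorem LForm.substTm_neg {σ : Ty} {s : Tm σ} {n : ℕ} :
    ∀ (A : LForm), (A.substTm n s).neg = A.neg.substTm n s := by
  intro A
  induction A <;> simp_all [LForm.neg, LForm.substTm] <;> split <;> simp_all [LForm.neg]

theorem CForm.substTm_emb {σ : Ty} {s : Tm σ} {n : ℕ} :
    ∀ (A : CForm), (A.substTm n s).emb = A.emb.substTm n s := by
  intro A
  induction A <;>
    simp_all [CForm.emb, CForm.substTm, LForm.substTm, LForm.substTm_neg] <;>
    split <;> simp_all [CForm.emb, LForm.substTm]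


variable {Ax : Set CForm}

/-- weakening by a nonlinear formula -/
theorem LProof.wkNL {C : LForm} (hC : C.Nonlinear) {Γ}
    (p : LProof false false Ax Γ) : LProof false false Ax (C :: Γ) := by
  have p2 : LProof false false Ax ((LForm.quest C).neg :: [C]) := by
    show LProof false false Ax (.bang C.neg :: [C])
    have b := LProof.bang2 (affine := false) (eqc := false) (Ax := Ax) (A := C.neg)
      hC.neg (by simp)
    rw [LForm.neg_neg] at b
    exact b.perm (List.Perm.swap _ _ _)
  exact ((LProof.wkq C p).cut p2).perm (List.perm_append_singleton _ _)

/-- contraction of a nonlinear formula -/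
theorem LProof.conNL {C : LForm} (hC : C.Nonlinear) {Γ}
    (p : LProof false false Ax (C :: C :: Γ)) : LProof false false Ax (C :: Γ) := by
  have p2 : LProof false false Ax ((LForm.quest C).neg :: [C]) := by
    show LProof false false Ax (.bang C.neg :: [C])
    have b := LProof.bang2 (affine := false) (eqc := false) (Ax := Ax) (A := C.neg)
      hC.neg (by simp)
    rw [LForm.neg_neg] at b
    exact b.perm (List.Perm.swap _ _ _)
  have d2 : LProof false false Ax (LForm.quest C :: LForm.quest C :: Γ) :=
    LProof.der ((LProof.der p).perm (List.Perm.swap _ _ _))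
  exact ((d2.conq).cut p2).perm (List.perm_append_singleton _ _)

/-- contraction of a duplicated nonlinear context -/
theorem LProof.conNLs {C : List LForm} (hC : ∀ B ∈ C, B.Nonlinear) :
    ∀ {Ξ : List LForm}, LProof false false Ax (C ++ C ++ Ξ) →
      LProof false false Ax (C ++ Ξ) := by
  induction C with
  | nil => intro Ξ p; simpa using p
  | cons B C' ih =>
    intro Ξ p
    have e1 : (B :: C') ++ (B :: C') ++ Ξ = B :: (C' ++ (B :: (C' ++ Ξ))) := by simp
    have h1 : (B :: (C' ++ (B :: (C' ++ Ξ)))).Perm (B :: B :: (C' ++ C' ++ Ξ)) := by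
      refine List.Perm.cons _ (List.perm_middle.trans ?_)
      simp
    have p1 : LProof false false Ax (B :: B :: (C' ++ C' ++ Ξ)) :=
      p.perm (by rw [e1] at p ⊢; exact h1)
    have p2 := LProof.conNL (hC B (by simp)) p1
    have h2 : (B :: (C' ++ C' ++ Ξ)).Perm (C' ++ C' ++ (B :: Ξ)) := by
      have : (B :: (C' ++ (C' ++ Ξ))).Perm (C' ++ (C' ++ (B :: Ξ))) :=
        (List.perm_middle.symm.trans (List.Perm.append_left _ List.perm_middle.symm))
      simpa using this
    have p3 := ih (fun B hB => hC B (by simp [hB])) (p2.perm h2)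
    refine p3.perm (List.perm_middle.trans ?_)
    simp


variable {Ax : Set CForm}

/-- The antecedent embedding. -/
def embL (Γ : List CForm) : List LForm := Γ.map (fun A => A.emb.neg)
/-- The succedent embedding. -/
def embR (Δ : List CForm) : List LForm := Δ.map CForm.emb

theorem emb_ctx_nonlinear (Γ Δ : List CForm) :
    ∀ B ∈ embL Γ ++ embR Δ, B.Nonlinear := by
  intro B hB
  simp [embL, embR] at hB
  rcases hB with ⟨A, _, rfl⟩ | ⟨A, _, rfl⟩
  · exact (CForm.emb_nonlinear A).neg
  · exact CForm.emb_nonlinear A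

theorem perm4 {α : Type*} (a b c d : List α) : ((a ++ b) ++ (c ++ d)).Perm ((a ++ c) ++ (b ++ d)) := by
  have h1 : (b ++ (c ++ d)).Perm (c ++ (b ++ d)) := by
    refine (List.perm_append_comm.trans ?_)
    have : ((c ++ d) ++ b).Perm (c ++ (d ++ b)) := by simp [List.append_assoc]
    refine this.trans (List.Perm.append_left _ List.perm_append_comm)
  have h2 : ((a ++ b) ++ (c ++ d)).Perm (a ++ (b ++ (c ++ d))) := by
    simp [List.append_assoc]
  have h3 : (a ++ (c ++ (b ++ d))).Perm ((a ++ c) ++ (b ++ d)) := by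
    simp [List.append_assoc]
  exact h2.trans ((List.Perm.append_left _ h1).trans h3)

/-- move the head of the succedent part to the front -/
theorem LProof.pmi {Γ Δ : List LForm} {X : LForm}
    (p : LProof false false Ax (X :: (Γ ++ Δ))) : LProof false false Ax (Γ ++ X :: Δ) :=
  p.perm List.perm_middle.symm

theorem LProof.pmo {Γ Δ : List LForm} {X : LForm}
    (p : LProof false false Ax (Γ ++ X :: Δ)) : LProof false false Ax (X :: (Γ ++ Δ)) :=
  p.perm List.perm_middle

/-- tensor with contraction of a shared nonlinear context -/
theorem LProof.tensorC {C : List LForm} (hC : ∀ B ∈ C, B.Nonlinear) {A B : LForm}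
    (p : LProof false false Ax (A :: C)) (q : LProof false false Ax (B :: C)) :
    LProof false false Ax ((LForm.tensor A B) :: C) := by
  have t := p.tensor q
  have t2 : LProof false false Ax (C ++ C ++ [LForm.tensor A B]) := t.perm (by
    have : (LForm.tensor A B :: (C ++ C)).Perm ((C ++ C) ++ [LForm.tensor A B]) :=
      (List.perm_append_singleton _ _).symm
    simpa using this)
  exact (LProof.conNLs hC t2).perm (List.perm_append_singleton _ _)

theorem transfer {Γ Δ : List CForm} (p : CProof Ax Γ Δ) :
    LProof false false Ax (embL Γ ++ embR Δ) := by
  induction p with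
  | ax h => exact LProof.fromAx h
  | id A => exact (LProof.id A.emb).perm (List.Perm.swap _ _ _)
  | @cut Γ Δ Γ' Δ' A p q ihp ihq =>
    have h1 : LProof false false Ax (A.emb :: (embL Γ ++ embR Δ)) := by
      have : embR (A :: Δ) = A.emb :: embR Δ := rfl
      exact LProof.pmo (by rw [← this]; exact ihp)
    have h2 : LProof false false Ax (A.emb.neg :: (embL Γ' ++ embR Δ')) := ihq
    have c := h1.cut h2
    refine c.perm ?_
    have := perm4 (embL Γ) (embR Δ) (embL Γ') (embR Δ')
    simp only [embL, embR, List.map_append] at *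
    exact this
  | permL p h ih => exact ih.perm ((h.map _).append (List.Perm.refl _))
  | permR p h ih => exact ih.perm (List.Perm.append (List.Perm.refl _) (h.map _))
  | @wkL Γ Δ A p ih => exact (ih.wkNL ((CForm.emb_nonlinear A).neg))
  | @wkR Γ Δ A p ih => exact LProof.pmi (ih.wkNL (CForm.emb_nonlinear A))
  | @conL Γ Δ A p ih => exact ih.conNL ((CForm.emb_nonlinear A).neg)
  | @conR Γ Δ A p ih =>
    refine LProof.pmi (LProof.conNL (CForm.emb_nonlinear A) ?_)
    have h1 : LProof false false Ax (A.emb :: (embL Γ ++ (A.emb :: embR Δ))) := LProof.pmo ih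
    exact h1.perm (List.Perm.cons _ List.perm_middle)
  | @notL Γ Δ A p ih =>
    show LProof false false Ax ((A.emb.neg.neg :: embL Γ) ++ embR Δ)
    rw [LForm.neg_neg]
    exact LProof.pmo ih
  | @notR Γ Δ A p ih => exact LProof.pmi ih
  | @andL Γ Δ A B p ih => exact LProof.par ih
  | @andR Γ Δ A B p q ihp ihq =>
    refine LProof.pmi (LProof.tensorC (emb_ctx_nonlinear Γ Δ) (LProof.pmo ihp) (LProof.pmo ihq))
  | @orL Γ Δ A B p q ihp ihq =>
    exact LProof.tensorC (emb_ctx_nonlinear Γ Δ) ihp ihq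
  | @orR Γ Δ A B p ih =>
    refine LProof.pmi (LProof.par ?_)
    exact (LProof.pmo ih).perm (List.Perm.cons _ List.perm_middle)
  | @impL Γ Δ A B p q ihp ihq =>
    show LProof false false Ax ((LForm.tensor A.emb.neg.neg B.emb.neg :: embL Γ) ++ embR Δ)
    rw [LForm.neg_neg]
    exact LProof.tensorC (emb_ctx_nonlinear Γ Δ) (LProof.pmo ihp) ihq
  | @impR Γ Δ A B p ih =>
    refine LProof.pmi (LProof.par ?_)
    exact ih.perm (List.Perm.cons _ List.perm_middle)
  | @allL Γ Δ A n σ t hff p ih =>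
    refine LProof.exR t ((CForm.FreeFor.emb hff).neg) ?_
    show LProof false false Ax ((A.emb.neg.substTm n t) :: (embL Γ ++ embR Δ))
    rw [← LForm.substTm_neg, ← CForm.substTm_emb]
    exact ih
  | @allR Γ Δ A n σ hfr hfr' p ih =>
    refine LProof.pmi (LProof.allR ?_ (LProof.pmo ih))
    intro B hB
    simp [embL, embR] at hB
    rcases hB with ⟨A', hA', rfl⟩ | ⟨A', hA', rfl⟩
    · simpa using hfr A' hA'
    · simpa using hfr' A' hA'
  | @exL Γ Δ A n σ hfr hfr' p ih =>
    refine LProof.allR ?_ ih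
    intro B hB
    simp [embL, embR] at hB
    rcases hB with ⟨A', hA', rfl⟩ | ⟨A', hA', rfl⟩
    · simpa using hfr A' hA'
    · simpa using hfr' A' hA'
  | @exR Γ Δ A n σ t hff p ih =>
    refine LProof.pmi (LProof.exR t (CForm.FreeFor.emb hff) ?_)
    show LProof false false Ax ((A.emb.substTm n t) :: (embL Γ ++ embR Δ))
    rw [← CForm.substTm_emb]
    exact LProof.pmo ih



theorem cW_closed : cW.Closed := by
  show cW.fvars = ∅
  ext ⟨n, τ⟩
  simp [cW, c1W, c2W, c3W, BW, predT, codeAt, seqCodeT, recO, pairT, addT, triT,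
    Tm.fvars]
  tauto

/-- `lp` of the witness term from `lp` of its arguments. -/
theorem lpPart : LProof false false EPA
    [.lp Ty1 ZT, .nlp Ty1 (.var 0 Ty1), .nlp Ty1 (.var 1 Ty1), .nlp Ty1 (.var 5 Ty1)] := by
  have p1 : LProof false false EPA [.lp _ cW] := LProof.lpAx cW cW_closed
  have p2 := LProof.lpApp (affine := false) (eqc := false) (Ax := EPA) cW (.var 0 Ty1)
  have c1 : LProof false false EPA [.nlp Ty1 (.var 0 Ty1), .lp _ (cW.app (.var 0 Ty1))] :=
    p1.cut p2
  have p3 := LProof.lpApp (affine := false) (eqc := false) (Ax := EPA)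
    (cW.app (.var 0 Ty1)) (.var 1 Ty1)
  have c2 : LProof false false EPA ([.nlp Ty1 (.var 0 Ty1)] ++
      [.nlp Ty1 (.var 1 Ty1), .lp _ ((cW.app (.var 0 Ty1)).app (.var 1 Ty1))]) :=
    (c1.perm (List.Perm.swap _ _ _)).cut p3
  have p4 := LProof.lpApp (affine := false) (eqc := false) (Ax := EPA)
    ((cW.app (.var 0 Ty1)).app (.var 1 Ty1)) (.var 5 Ty1)
  have c3 : LProof false false EPA ([.nlp Ty1 (.var 0 Ty1), .nlp Ty1 (.var 1 Ty1)] ++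
      [.nlp Ty1 (.var 5 Ty1), .lp Ty1 ZT]) := by
    refine LProof.cut (A := .lp _ ((cW.app (.var 0 Ty1)).app (.var 1 Ty1))) ?_ p4
    refine c2.perm ?_
    have := List.perm_append_singleton
      (l := [LForm.nlp Ty1 (.var 0 Ty1), LForm.nlp Ty1 (.var 1 Ty1)])
      (LForm.lp (Ty1 ⤳ Ty1) ((cW.app (.var 0 Ty1)).app (.var 1 Ty1)))
    simpa using this
  refine c3.perm ?_
  have : ([LForm.nlp Ty1 (.var 0 Ty1), .nlp Ty1 (.var 1 Ty1), .nlp Ty1 (.var 5 Ty1)] ++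
      [LForm.lp Ty1 ZT]).Perm
      ([LForm.lp Ty1 ZT] ++ [.nlp Ty1 (.var 0 Ty1), .nlp Ty1 (.var 1 Ty1), .nlp Ty1 (.var 5 Ty1)]) :=
    List.perm_append_comm
  simpa using this

theorem final
    (tch : Tm (Ty1 ⤳ Ty1 ⤳ 𝕆 ⤳ 𝕆 ⤳ 𝕆)) (htc : tch.Closed)
    (hspec : CProof EPA [] [chSpec tch]) :
    LProof false false EPA
      [.nlp Ty1 (.var 0 Ty1), .nlp Ty1 (.var 1 Ty1),
        (exLp 5 Ty1 ((CForm.all 2 𝕆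
          (aAt tch (.var 0 Ty1) (.var 1 Ty1) (v0 2)
            ((Tm.var 5 Ty1).app (v0 2)))).emb)).neg,
        exLp 6 Ty1 ((witF (Tm.var 0 Ty1) (Tm.var 1 Ty1) (Tm.var 6 Ty1)).emb)] := by
  have hfc : tch.fvars = ∅ := htc
  set Hc : CForm := .all 2 𝕆 (aAt tch (.var 0 Ty1) (.var 1 Ty1) (v0 2)
    ((Tm.var 5 Ty1).app (v0 2))) with hHc
  -- wit part : ⊢ WitGoal.emb, Hc.emb.neg
  have witPart : LProof false false EPA [WitGoal.emb, Hc.emb.neg] :=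
    (transfer (mainC htc hspec)).perm (List.Perm.swap _ _ _)
  -- tensor of lp-part and wit-part
  have tens : LProof false false EPA
      ((LForm.tensor (.lp Ty1 ZT) WitGoal.emb) ::
        ([.nlp Ty1 (.var 0 Ty1), .nlp Ty1 (.var 1 Ty1), .nlp Ty1 (.var 5 Ty1)] ++
          [Hc.emb.neg])) :=
    LProof.tensor lpPart witPart
  -- introduce the existential with witness `ZT`
  have exw : LProof false false EPA
      ((exLp 6 Ty1 ((witF (Tm.var 0 Ty1) (Tm.var 1 Ty1) (Tm.var 6 Ty1)).emb)) ::
        ([.nlp Ty1 (.var 0 Ty1), .nlp Ty1 (.var 1 Ty1), .nlp Ty1 (.var 5 Ty1)] ++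
          [Hc.emb.neg])) := by
    refine LProof.exR ZT ?_ ?_
    · refine LForm.freeFor_of_disjoint ?_
      intro p hp
      simp [LForm.bv, witF, CForm.emb, ltF, neqF, Tm.maxVar, codeAt, seqCodeT, recO,
        addT, pairT, triT, LForm.neg] at hp
      simp [Tm.fvars, ZT, cW, c1W, c2W, c3W, BW, predT, codeAt, seqCodeT, recO, pairT, triT, addT]
      rcases hp with rfl | rfl | rfl | rfl <;> simp
    · exact tens
  -- par / allR for the negated hypothesis
  have parStep : LProof false false EPA
      ((LForm.par (.nlp Ty1 (.var 5 Ty1)) Hc.emb.neg) ::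
        [.nlp Ty1 (.var 0 Ty1), .nlp Ty1 (.var 1 Ty1),
          exLp 6 Ty1 ((witF (Tm.var 0 Ty1) (Tm.var 1 Ty1) (Tm.var 6 Ty1)).emb)]) := by
    refine LProof.par ?_
    refine exw.perm ?_
    -- [exw, nlpX, nlpY, nlpV, Hneg] ~ [nlpV, Hneg, nlpX, nlpY, exw]
    have h1 : (exLp 6 Ty1 ((witF (Tm.var 0 Ty1) (Tm.var 1 Ty1) (Tm.var 6 Ty1)).emb) ::
        [LForm.nlp Ty1 (.var 0 Ty1), .nlp Ty1 (.var 1 Ty1), .nlp Ty1 (.var 5 Ty1),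
          Hc.emb.neg]).Perm
        (LForm.nlp Ty1 (.var 5 Ty1) :: Hc.emb.neg ::
          [.nlp Ty1 (.var 0 Ty1), .nlp Ty1 (.var 1 Ty1),
            exLp 6 Ty1 ((witF (Tm.var 0 Ty1) (Tm.var 1 Ty1) (Tm.var 6 Ty1)).emb)]) := by
      have := List.perm_append_comm
        (l₁ := [exLp 6 Ty1 ((witF (Tm.var 0 Ty1) (Tm.var 1 Ty1) (Tm.var 6 Ty1)).emb),
          LForm.nlp Ty1 (.var 0 Ty1), .nlp Ty1 (.var 1 Ty1)])
        (l₂ := [LForm.nlp Ty1 (.var 5 Ty1), Hc.emb.neg])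
      refine this.trans ?_
      refine (List.Perm.append_left _ ?_)
      exact List.perm_append_comm (l₁ := [exLp 6 Ty1 _, LForm.nlp Ty1 (.var 0 Ty1)])
        (l₂ := [LForm.nlp Ty1 (.var 1 Ty1)]) |>.trans
          ((List.Perm.cons _ (List.Perm.swap _ _ _)).trans (List.Perm.swap _ _ _))
    simpa using h1
  have allStep : LProof false false EPA
      (((exLp 5 Ty1 (Hc.emb)).neg) ::
        [.nlp Ty1 (.var 0 Ty1), .nlp Ty1 (.var 1 Ty1),
          exLp 6 Ty1 ((witF (Tm.var 0 Ty1) (Tm.var 1 Ty1) (Tm.var 6 Ty1)).emb)]) := by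
    refine LProof.allR ?_ parStep
    intro B hB
    simp at hB
    rcases hB with rfl | rfl | rfl
    · simp [LForm.fvars, Tm.fvars]
    · simp [LForm.fvars, Tm.fvars]
    · simp [exLp, LForm.fvars, Tm.fvars, witF, CForm.fvars_emb, CForm.fvars, ltF,
        neqF, Tm.maxVar, codeAt, seqCodeT, recO, addT, pairT, triT]
  refine allStep.perm ?_
  exact List.Perm.trans (List.Perm.swap _ _ _) (List.Perm.cons _ (List.Perm.swap _ _ _))


theorem Aat_witness_yields_linear_wit
    (tch : Tm (Ty1 ⤳ Ty1 ⤳ 𝕆 ⤳ 𝕆 ⤳ 𝕆)) (htc : tch.Closed)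
    (hspec : CProof EPA [] [chSpec tch]) :
    LProof false false EPA
      [.nlp Ty1 (.var 0 Ty1), .nlp Ty1 (.var 1 Ty1),
        (exLp 5 Ty1 ((CForm.all 2 𝕆
          (aAt tch (.var 0 Ty1) (.var 1 Ty1) (v0 2)
            ((Tm.var 5 Ty1).app (v0 2)))).emb)).neg,
        exLp 6 Ty1 ((witF (Tm.var 0 Ty1) (Tm.var 1 Ty1) (Tm.var 6 Ty1)).emb)] := by
  exact final tch htc hspec

end WR
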